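/- arXiv:2408.13591 — 4 statements merged into one kernel-verified Lean document; each statement's English description precedes it below -/
import Mathlib

section
/- Let H be a separable real Hilbert space, T a bounded positive self-adjoint operator on H, r ∈ (0,1], λ ∈ (0,1), R > 0, and h ∈ H with ‖h‖ ≤ R. Set f* = T^r h (the r-th power of T applied to h) and f_λ = (T + λI)^{-1} T f*. Then ‖f_λ − f*‖ ≤ R·λ^r. -/
open MeasureTheory
open scoped RealInnerProductSpace ENNReal

section OperatorPowers

variable {H : Type*} [NormedAddCommGroup H] [InnerProductSpace ℝ H] [CompleteSpace H]

/-- The Balakrishnan integral `(sin(rπ)/π) • ∫₀^∞ s^(r-1) • (T ∘ (T + s•I)⁻¹) ds`, which for a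
bounded positive self-adjoint operator `T` and `r ∈ (0,1)` is the fractional power `T ^ r`
given by the continuous functional calculus. -/
noncomputable def fracPow (T : H →L[ℝ] H) (r : ℝ) : H →L[ℝ] H :=
  (Real.sin (r * Real.pi) / Real.pi) •
    ∫ s in Set.Ioi (0 : ℝ), s ^ (r - 1) • (T * Ring.inverse (T + s • 1))

/-- `T ^ r` for `r ≥ 0`: the functional-calculus power of a bounded positive self-adjoint
operator, obtained from integer powers and the Balakrishnan fractional power. -/
noncomputable def nnPow (T : H →L[ℝ] H) (r : ℝ) : H →L[ℝ] H :=
  T ^ ⌊r⌋₊ * (if r - ⌊r⌋₊ = 0 then 1 else fracPow T (r - ⌊r⌋₊))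

/-- The real power `T ^ r` of a bounded positive self-adjoint operator `T` (with `T`
moreover invertible when `r < 0`), as given by the continuous functional calculus. -/
noncomputable def opRpow (T : H →L[ℝ] H) (r : ℝ) : H →L[ℝ] H :=
  if 0 ≤ r then nnPow T r else Ring.inverse (nnPow T (-r))

end OperatorPowers

section Aux

variable {H : Type*} [NormedAddCommGroup H] [InnerProductSpace ℝ H] [CompleteSpace H]

/-- A self-adjoint coercive operator is a unit. -/
lemma aux_isUnit (S : H →L[ℝ] H) {mu : ℝ} (hmu : 0 < mu)
    (hco : ∀ x, mu * ‖x‖ ^ 2 ≤ ⟪S x, x⟫) : IsUnit S := by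
  have hB : IsCoercive ((innerSL ℝ).comp S) := by
    refine ⟨mu, hmu, fun u => ?_⟩
    have := hco u
    simpa [mul_assoc, sq] using this
  set e := hB.continuousLinearEquivOfBilin with he
  have happ : ∀ v, S v = e v := by
    intro v
    refine (ext_inner_right ℝ fun w => ?_)
    rw [hB.continuousLinearEquivOfBilin_apply]
    simp
  refine ⟨⟨S, e.symm.toContinuousLinearMap, ?_, ?_⟩, rfl⟩
  · ext x
    simp [ContinuousLinearMap.mul_apply, happ]
  · ext x
    simp [ContinuousLinearMap.mul_apply, happ]

end Aux

section Aux2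

variable {H : Type*} [NormedAddCommGroup H] [InnerProductSpace ℝ H] [CompleteSpace H]

lemma aux_coercive {T : H →L[ℝ] H} (hT : T.IsPositive) {s : ℝ} (hs : 0 < s) (x : H) :
    s * ‖x‖ ^ 2 ≤ ⟪(T + s • 1) x, x⟫ := by
  have h1 := hT.2 x
  rw [ContinuousLinearMap.reApplyInnerSelf_apply] at h1
  simp only [RCLike.re_to_real] at h1
  have : ⟪(T + s • 1) x, x⟫ = ⟪T x, x⟫ + s * ‖x‖ ^ 2 := by
    simp [inner_add_left, real_inner_smul_left, real_inner_self_eq_norm_sq]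
  linarith

lemma aux_unit {T : H →L[ℝ] H} (hT : T.IsPositive) {s : ℝ} (hs : 0 < s) :
    IsUnit (T + s • 1) :=
  aux_isUnit _ hs (aux_coercive hT hs)

lemma aux_inv_apply {T : H →L[ℝ] H} (hT : T.IsPositive) {s : ℝ} (hs : 0 < s) (x : H) :
    Ring.inverse (T + s • 1) ((T + s • 1) x) = x := by
  have := congrArg (fun L : H →L[ℝ] H => L x) (Ring.inverse_mul_cancel _ (aux_unit hT hs))
  simpa using this

lemma aux_apply_inv {T : H →L[ℝ] H} (hT : T.IsPositive) {s : ℝ} (hs : 0 < s) (x : H) :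
    (T + s • 1) (Ring.inverse (T + s • 1) x) = x := by
  have := congrArg (fun L : H →L[ℝ] H => L x) (Ring.mul_inverse_cancel _ (aux_unit hT hs))
  simpa using this

lemma aux_inv_norm {T : H →L[ℝ] H} (hT : T.IsPositive) {s : ℝ} (hs : 0 < s) (x : H) :
    ‖Ring.inverse (T + s • 1) x‖ ≤ s⁻¹ * ‖x‖ := by
  set y := Ring.inverse (T + s • 1) x with hy
  have h1 : (T + s • 1) y = x := aux_apply_inv hT hs x
  have h2 : s * ‖y‖ ^ 2 ≤ ⟪x, y⟫ := h1 ▸ aux_coercive hT hs y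
  have h3 : ⟪x, y⟫ ≤ ‖x‖ * ‖y‖ := real_inner_le_norm x y
  rcases eq_or_lt_of_le (norm_nonneg y) with h | h
  · rw [← h]; positivity
  · rw [inv_mul_eq_div, le_div_iff₀ hs]
    nlinarith

end Aux2

section Aux3

variable {H : Type*} [NormedAddCommGroup H] [InnerProductSpace ℝ H] [CompleteSpace H]

lemma aux_symm {T : H →L[ℝ] H} (hT : T.IsPositive) (x y : H) : ⟪T x, y⟫ = ⟪x, T y⟫ :=
  hT.1 x y

lemma aux_inner_nonneg {T : H →L[ℝ] H} (hT : T.IsPositive) (x : H) : 0 ≤ ⟪T x, x⟫ := by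
  have h1 := hT.2 x
  rwa [ContinuousLinearMap.reApplyInnerSelf_apply, RCLike.re_to_real] at h1

/-- Key estimate: `‖λ (T+λ)⁻¹ T (T+s)⁻¹ x‖ ≤ (λ/(λ+s)) ‖x‖`. -/
lemma aux_key {T : H →L[ℝ] H} (hT : T.IsPositive) {lam s : ℝ} (hlam : 0 < lam) (hs : 0 < s)
    (x : H) :
    lam * ‖Ring.inverse (T + lam • 1) (T (Ring.inverse (T + s • 1) x))‖ ≤
      lam / (lam + s) * ‖x‖ := by
  set w := Ring.inverse (T + lam • 1) (Ring.inverse (T + s • 1) x) with hw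
  have h1 : Ring.inverse (T + s • 1) x = (T + lam • 1) w := (aux_apply_inv hT hlam _).symm
  have hTA : ∀ z : H, T ((T + lam • 1) z) = (T + lam • 1) (T z) := by
    intro z; simp [map_add, _root_.map_smul]
  have h3 : Ring.inverse (T + lam • 1) (T (Ring.inverse (T + s • 1) x)) = T w := by
    rw [h1, hTA, aux_inv_apply hT hlam]
  have h2 : x = (T + s • 1) ((T + lam • 1) w) := by
    rw [← h1, aux_apply_inv hT hs]
  rw [h3]
  -- reduce to `(lam+s) * ‖T w‖ ≤ ‖x‖`
  have key : (lam + s) * ‖T w‖ ≤ ‖x‖ := by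
    have hls : 0 < lam + s := by linarith
    rw [← pow_le_pow_iff_left₀ (by positivity) (norm_nonneg x) (two_ne_zero)]
    have hx2 : ‖x‖ ^ 2 = ⟪x, x⟫ := (real_inner_self_eq_norm_sq x).symm
    have hxw : x = T (T w) + (lam + s) • T w + (lam * s) • w := by
      rw [h2]
      simp only [ContinuousLinearMap.add_apply, ContinuousLinearMap.smul_apply,
        ContinuousLinearMap.one_apply, map_add, _root_.map_smul]
      module
    have e1 : 0 ≤ ⟪T (T w), T w⟫ := aux_inner_nonneg hT (T w)
    have e2 : ⟪T (T w), w⟫ = ⟪T w, T w⟫ := aux_symm hT (T w) w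
    have e3 : 0 ≤ ⟪T w, w⟫ := aux_inner_nonneg hT w
    have e4 : 0 ≤ ⟪w, w⟫ := real_inner_self_nonneg
    have e5 : 0 ≤ ⟪T (T w), T (T w)⟫ := real_inner_self_nonneg
    have hTw2 : ‖T w‖ ^ 2 = ⟪T w, T w⟫ := (real_inner_self_eq_norm_sq (T w)).symm
    rw [hx2, hxw]
    simp only [inner_add_left, inner_add_right, real_inner_smul_left, real_inner_smul_right,
      mul_pow]
    have e1' : 0 ≤ ⟪T w, T (T w)⟫ := by rwa [real_inner_comm] at e1
    have e2' : ⟪w, T (T w)⟫ = ⟪T w, T w⟫ := by rwa [real_inner_comm] at e2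
    have e3' : 0 ≤ ⟪w, T w⟫ := by rwa [real_inner_comm] at e3
    rw [hTw2, e2, e2']
    nlinarith [mul_nonneg hls.le e1, mul_nonneg hls.le e1',
      mul_nonneg (mul_pos hlam hs).le e3, mul_nonneg (mul_pos hlam hs).le e3',
      mul_nonneg (mul_nonneg hls.le (mul_pos hlam hs).le) e3,
      mul_nonneg (mul_nonneg hls.le (mul_pos hlam hs).le) e3',
      mul_nonneg (mul_nonneg (mul_pos hlam hs).le (mul_pos hlam hs).le) e4,
      mul_nonneg (mul_pos hlam hs).le (real_inner_self_nonneg (x := T w)), e5]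
  calc lam * ‖T w‖ = lam / (lam + s) * ((lam + s) * ‖T w‖) := by
        field_simp
      _ ≤ lam / (lam + s) * ‖x‖ := by
        apply mul_le_mul_of_nonneg_left key (by positivity)

/-- Key estimate for the `r = 1` case : `‖λ (T+λ)⁻¹ T x‖ ≤ λ ‖x‖`. -/
lemma aux_key1 {T : H →L[ℝ] H} (hT : T.IsPositive) {lam : ℝ} (hlam : 0 < lam) (x : H) :
    lam * ‖Ring.inverse (T + lam • 1) (T x)‖ ≤ lam * ‖x‖ := by
  set w := Ring.inverse (T + lam • 1) x with hw
  have h1 : x = (T + lam • 1) w := (aux_apply_inv hT hlam _).symm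
  have h3 : Ring.inverse (T + lam • 1) (T x) = T w := by
    rw [h1]
    have : T ((T + lam • 1) w) = (T + lam • 1) (T w) := by simp [map_add, _root_.map_smul]
    rw [this, aux_inv_apply hT hlam]
  rw [h3]
  have key : ‖T w‖ ≤ ‖x‖ := by
    rw [← pow_le_pow_iff_left₀ (norm_nonneg _) (norm_nonneg x) (two_ne_zero)]
    have hxw : x = T w + lam • w := by
      rw [h1]; simp
    have e3 : 0 ≤ ⟪T w, w⟫ := aux_inner_nonneg hT w
    have e4 : 0 ≤ ⟪w, w⟫ := real_inner_self_nonneg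
    have hTw2 : ‖T w‖ ^ 2 = ⟪T w, T w⟫ := (real_inner_self_eq_norm_sq (T w)).symm
    have hx2 : ‖x‖ ^ 2 = ⟪x, x⟫ := (real_inner_self_eq_norm_sq x).symm
    rw [hx2, hxw, hTw2]
    simp only [inner_add_left, inner_add_right, real_inner_smul_left, real_inner_smul_right]
    have e3' : 0 ≤ ⟪w, T w⟫ := by rwa [real_inner_comm] at e3
    nlinarith [mul_nonneg hlam.le e3, mul_nonneg hlam.le e3',
      mul_nonneg (mul_nonneg hlam.le hlam.le) e4]
  exact mul_le_mul_of_nonneg_left key hlam.le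

end Aux3

section Beta

open Real Set

lemma aux_beta {r : ℝ} (hr0 : 0 < r) (hr1 : r < 1) :
    ∫ t in Set.Ioo (0:ℝ) 1, t ^ (r-1) * (1-t) ^ (-r) = Real.pi / Real.sin (Real.pi * r) := by
  have hb : Complex.betaIntegral r (1 - r) = Complex.Gamma r * Complex.Gamma (1 - r) := by
    have h1 := Complex.Gamma_mul_Gamma_eq_betaIntegral
      (s := (r:ℂ)) (t := 1 - r) (by simpa using hr0) (by simp [hr1])
    rw [show (r:ℂ) + (1 - r) = 1 by ring, Complex.Gamma_one, one_mul] at h1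
    exact h1.symm
  have hrefl : Complex.Gamma r * Complex.Gamma (1 - r)
      = (Real.pi : ℂ) / Complex.sin (Real.pi * r) := by
    have := Complex.Gamma_mul_Gamma_one_sub (r : ℂ)
    simpa using this
  have hreal : Complex.betaIntegral r (1 - r)
      = ((∫ t in (0:ℝ)..1, t ^ (r-1) * (1-t) ^ (-r) : ℝ) : ℂ) := by
    rw [Complex.betaIntegral, ← intervalIntegral.integral_ofReal]
    refine intervalIntegral.integral_congr fun t ht => ?_
    rw [Set.uIcc_of_le zero_le_one] at ht
    obtain ⟨ht0, ht1⟩ := ht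
    have h1t : (0:ℝ) ≤ 1 - t := by linarith
    rw [Complex.ofReal_mul, Complex.ofReal_cpow ht0, Complex.ofReal_cpow h1t]
    push_cast
    ring_nf
  have hsin : Complex.sin (Real.pi * r) = ((Real.sin (Real.pi * r) : ℝ) : ℂ) := by
    rw [Complex.ofReal_sin, Complex.ofReal_mul]
  have : ((∫ t in (0:ℝ)..1, t ^ (r-1) * (1-t) ^ (-r) : ℝ) : ℂ)
      = ((Real.pi / Real.sin (Real.pi * r) : ℝ) : ℂ) := by
    rw [← hreal, hb, hrefl, hsin, Complex.ofReal_div]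
  have h2 := Complex.ofReal_inj.mp this
  rw [← h2, intervalIntegral.integral_of_le zero_le_one,
    MeasureTheory.integral_Ioc_eq_integral_Ioo]

end Beta

section Subst

open Real Set

lemma aux_subst {r lam : ℝ} (hr0 : 0 < r) (hr1 : r < 1) (hl : 0 < lam) :
    ∫ s in Set.Ioi (0:ℝ), s ^ (r-1) * (lam / (lam + s))
      = lam ^ r * (Real.pi / Real.sin (Real.pi * r)) := by
  set f : ℝ → ℝ := fun t => lam * t / (1 - t) with hf
  have himg : f '' Set.Ioo 0 1 = Set.Ioi (0:ℝ) := by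
    ext y
    constructor
    · rintro ⟨t, ⟨ht0, ht1⟩, rfl⟩
      exact div_pos (mul_pos hl ht0) (by linarith)
    · intro hy
      rw [Set.mem_Ioi] at hy
      refine ⟨y / (lam + y), ⟨by positivity, ?_⟩, ?_⟩
      · rw [div_lt_one (by linarith)]; linarith
      · show lam * (y / (lam + y)) / (1 - y / (lam + y)) = y
        have hly : lam + y ≠ 0 := by positivity
        field_simp
        rw [add_sub_cancel_right, div_self hl.ne']
  have hderiv : ∀ t ∈ Set.Ioo (0:ℝ) 1,
      HasDerivWithinAt f (lam / (1 - t) ^ 2) (Set.Ioo 0 1) t := by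
    intro t ht
    have h1t : (1:ℝ) - t ≠ 0 := sub_ne_zero.mpr (ne_of_gt ht.2)
    have : HasDerivAt f (lam / (1 - t) ^ 2) t := by
      have h := (hasDerivAt_const t lam |>.mul (hasDerivAt_id t)).div
        ((hasDerivAt_const t (1:ℝ)).sub (hasDerivAt_id t)) h1t
      refine h.congr_deriv ?_
      simp only [Pi.sub_apply, Pi.mul_apply, id]
      field_simp
      ring
    exact this.hasDerivWithinAt
  have hinj : Set.InjOn f (Set.Ioo 0 1) := by
    intro a ha b hb hab
    have h1a : (1:ℝ) - a ≠ 0 := sub_ne_zero.mpr (ne_of_gt ha.2)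
    have h1b : (1:ℝ) - b ≠ 0 := sub_ne_zero.mpr (ne_of_gt hb.2)
    rw [hf] at hab
    simp only at hab
    rw [div_eq_div_iff (by simpa using h1a) (by simpa using h1b)] at hab
    have : lam * (a - b) = 0 := by ring_nf at hab ⊢; linarith
    have := mul_eq_zero.mp this
    rcases this with h | h
    · exact absurd h hl.ne'
    · linarith
  have key := MeasureTheory.integral_image_eq_integral_abs_deriv_smul measurableSet_Ioo
    hderiv hinj (fun s => s ^ (r-1) * (lam / (lam + s)))
  rw [himg] at key
  rw [key]
  have hcong : ∀ t ∈ Set.Ioo (0:ℝ) 1,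
      |lam / (1 - t) ^ 2| • (f t ^ (r-1) * (lam / (lam + f t)))
        = lam ^ r * (t ^ (r-1) * (1-t) ^ (-r)) := by
    intro t ht
    obtain ⟨ht0, ht1⟩ := ht
    have h1t : (0:ℝ) < 1 - t := by linarith
    have hft : f t = lam * t / (1 - t) := rfl
    have hlft : lam + f t = lam / (1 - t) := by
      rw [hft]; field_simp; ring
    have h2 : lam / (lam + f t) = 1 - t := by
      rw [hlft]; field_simp
    have h3 : f t ^ (r-1) = lam ^ (r-1) * t ^ (r-1) / (1-t) ^ (r-1) := by
      rw [hft, Real.div_rpow (by positivity) h1t.le, Real.mul_rpow hl.le ht0.le]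
    have h4 : |lam / (1 - t) ^ 2| = lam / (1-t) ^ 2 := abs_of_pos (by positivity)
    rw [h4, h2, h3, smul_eq_mul]
    have hBne : (1-t:ℝ) ^ (r-1) ≠ 0 := (Real.rpow_pos_of_pos h1t _).ne'
    have hBC : (1-t:ℝ) ^ (r-1) * (1-t) ^ (-r) = (1-t)⁻¹ := by
      rw [← Real.rpow_add h1t, ← Real.rpow_neg_one (1-t)]
      congr 1
      ring
    have hP : lam ^ r = lam ^ (r-1) * lam := by
      rw [Real.rpow_sub_one hl.ne']; field_simp
    have h5 : (1-t:ℝ) ^ (-r) = (1-t)⁻¹ / (1-t) ^ (r-1) := by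
      rw [eq_div_iff hBne, mul_comm]
      exact hBC
    rw [h5, hP]
    field_simp
  rw [MeasureTheory.setIntegral_congr_fun measurableSet_Ioo hcong,
    MeasureTheory.integral_const_mul, aux_beta hr0 hr1]

end Subst

section Integrability

open Real Set MeasureTheory

lemma aux_scalar_integrable {r lam : ℝ} (hr0 : 0 < r) (hr1 : r < 1) (hl : 0 < lam) :
    IntegrableOn (fun s : ℝ => s ^ (r-1) * (lam / (lam + s))) (Ioi 0) := by
  rw [← Set.Ioc_union_Ioi_eq_Ioi (zero_le_one (α := ℝ))]
  apply IntegrableOn.union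
  · apply Integrable.mono' (g := fun s : ℝ => s ^ (r-1))
    · exact (intervalIntegral.intervalIntegrable_rpow' (by linarith)).1
    · apply ContinuousOn.aestronglyMeasurable _ measurableSet_Ioc
      intro s hs
      apply ContinuousAt.continuousWithinAt
      exact (Real.continuousAt_rpow_const s (r-1) (Or.inl (ne_of_gt hs.1))).mul
        (continuousAt_const.div (continuousAt_const.add continuousAt_id)
          (by have := hs.1; positivity))
    · refine (ae_restrict_mem measurableSet_Ioc).mono fun s hs => ?_
      have hs0 : 0 < s := hs.1
      have h1 : 0 < lam + s := by linarith
      rw [Real.norm_eq_abs, abs_of_nonneg (by positivity)]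
      exact mul_le_of_le_one_right (Real.rpow_nonneg hs0.le _)
        ((div_le_one h1).mpr (by linarith))
  · apply Integrable.mono' (g := fun s : ℝ => lam * s ^ (r-2))
    · exact (integrableOn_Ioi_rpow_of_lt (by linarith) one_pos).const_mul lam
    · apply ContinuousOn.aestronglyMeasurable _ measurableSet_Ioi
      intro s hs
      have hs0 : (0:ℝ) < s := lt_trans one_pos hs
      apply ContinuousAt.continuousWithinAt
      exact (Real.continuousAt_rpow_const s (r-1) (Or.inl (ne_of_gt hs0))).mul
        (continuousAt_const.div (continuousAt_const.add continuousAt_id) (by positivity))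
    · refine (ae_restrict_mem measurableSet_Ioi).mono fun s hs => ?_
      have hs0 : (0:ℝ) < s := lt_trans one_pos hs
      have h1 : 0 < lam + s := by linarith
      rw [Real.norm_eq_abs, abs_of_nonneg (by positivity)]
      calc s ^ (r-1) * (lam / (lam + s)) ≤ s ^ (r-1) * (lam / s) := by
            apply mul_le_mul_of_nonneg_left _ (Real.rpow_nonneg hs0.le _)
            apply div_le_div_of_nonneg_left hl.le hs0 (by linarith)
          _ = lam * s ^ (r-2) := by
            rw [div_eq_mul_inv, show r - 2 = (r-1) + (-1) by ring, Real.rpow_add hs0,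
              Real.rpow_neg_one]
            ring

variable {H : Type*} [NormedAddCommGroup H] [InnerProductSpace ℝ H] [CompleteSpace H]

lemma aux_op_norm_le {T : H →L[ℝ] H} (hT : T.IsPositive) {s : ℝ} (hs : 0 < s) :
    ‖T * Ring.inverse (T + s • 1)‖ ≤ 2 ∧
      ‖T * Ring.inverse (T + s • 1)‖ ≤ ‖T‖ * s⁻¹ := by
  set N := Ring.inverse (T + s • 1) with hN
  have hNnorm : ‖N‖ ≤ s⁻¹ :=
    ContinuousLinearMap.opNorm_le_bound _ (inv_nonneg.mpr hs.le) (aux_inv_norm hT hs)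
  constructor
  · have h1 : (T + s • 1) * N = 1 := Ring.mul_inverse_cancel _ (aux_unit hT hs)
    have h2 : T * N = 1 - s • N := by
      ext x
      have hx := congrArg (fun L : H →L[ℝ] H => L x) h1
      simp only [ContinuousLinearMap.mul_apply, ContinuousLinearMap.add_apply,
        ContinuousLinearMap.smul_apply, ContinuousLinearMap.one_apply,
        ContinuousLinearMap.sub_apply] at hx ⊢
      exact eq_sub_of_add_eq hx
    rw [h2]
    calc ‖(1 : H →L[ℝ] H) - s • N‖ ≤ ‖(1 : H →L[ℝ] H)‖ + ‖s • N‖ := norm_sub_le _ _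
      _ ≤ 1 + s * s⁻¹ := by
          apply add_le_add
          · rw [ContinuousLinearMap.one_def]; exact ContinuousLinearMap.norm_id_le
          · refine le_trans (ContinuousLinearMap.opNorm_smul_le _ _) ?_
            rw [Real.norm_eq_abs, abs_of_pos hs]
            exact mul_le_mul_of_nonneg_left hNnorm hs.le
      _ ≤ 2 := by rw [mul_inv_cancel₀ (ne_of_gt hs)]; norm_num
  · exact le_trans (norm_mul_le _ _) (mul_le_mul_of_nonneg_left hNnorm (norm_nonneg T))

lemma aux_op_integrable {T : H →L[ℝ] H} (hT : T.IsPositive) {r : ℝ}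
    (hr0 : 0 < r) (hr1 : r < 1) :
    IntegrableOn (fun s : ℝ => s ^ (r-1) • (T * Ring.inverse (T + s • 1))) (Ioi 0) := by
  have hcont : ∀ s : ℝ, 0 < s →
      ContinuousAt (fun s : ℝ => s ^ (r-1) • (T * Ring.inverse (T + s • 1))) s := by
    intro s hs
    have h1 : ContinuousAt (Ring.inverse : (H →L[ℝ] H) → (H →L[ℝ] H)) (T + s • 1) := by
      have := NormedRing.inverse_continuousAt ((aux_unit hT hs).unit)
      rwa [IsUnit.unit_spec] at this
    have hA : Continuous (fun s : ℝ => T + s • (1 : H →L[ℝ] H)) :=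
      continuous_const.add (continuous_id.smul continuous_const)
    have h2 : ContinuousAt (fun s : ℝ => Ring.inverse (T + s • 1)) s :=
      ContinuousAt.comp (f := fun s : ℝ => T + s • 1) h1 hA.continuousAt
    exact (Real.continuousAt_rpow_const s (r-1) (Or.inl (ne_of_gt hs))).smul
      (continuousAt_const.mul h2)
  rw [← Set.Ioc_union_Ioi_eq_Ioi (zero_le_one (α := ℝ))]
  apply IntegrableOn.union
  · apply Integrable.mono' (g := fun s : ℝ => 2 * s ^ (r-1))
    · exact ((intervalIntegral.intervalIntegrable_rpow'
        (r := r-1) (by linarith)).1.const_mul 2)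
    · exact ContinuousOn.aestronglyMeasurable_of_isSeparable
        (fun s hs => (hcont s hs.1).continuousWithinAt) measurableSet_Ioc
        (.of_separableSpace _)
    · refine (ae_restrict_mem measurableSet_Ioc).mono fun s hs => ?_
      have hs0 : 0 < s := hs.1
      calc ‖s ^ (r-1) • (T * Ring.inverse (T + s • 1))‖
          ≤ ‖(s ^ (r-1) : ℝ)‖ * ‖T * Ring.inverse (T + s • 1)‖ :=
            ContinuousLinearMap.opNorm_smul_le _ _
        _ = s ^ (r-1) * ‖T * Ring.inverse (T + s • 1)‖ := by
            rw [Real.norm_eq_abs, abs_of_nonneg (Real.rpow_nonneg hs0.le _)]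
        _ ≤ s ^ (r-1) * 2 :=
            mul_le_mul_of_nonneg_left (aux_op_norm_le hT hs0).1 (Real.rpow_nonneg hs0.le _)
        _ = 2 * s ^ (r-1) := by ring
  · apply Integrable.mono' (g := fun s : ℝ => ‖T‖ * s ^ (r-2))
    · exact (integrableOn_Ioi_rpow_of_lt (by linarith) one_pos).const_mul ‖T‖
    · exact ContinuousOn.aestronglyMeasurable_of_isSeparable
        (fun s hs => (hcont s (lt_trans one_pos hs)).continuousWithinAt) measurableSet_Ioi
        (.of_separableSpace _)
    · refine (ae_restrict_mem measurableSet_Ioi).mono fun s hs => ?_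
      have hs0 : (0:ℝ) < s := lt_trans one_pos hs
      calc ‖s ^ (r-1) • (T * Ring.inverse (T + s • 1))‖
          ≤ ‖(s ^ (r-1) : ℝ)‖ * ‖T * Ring.inverse (T + s • 1)‖ :=
            ContinuousLinearMap.opNorm_smul_le _ _
        _ = s ^ (r-1) * ‖T * Ring.inverse (T + s • 1)‖ := by
            rw [Real.norm_eq_abs, abs_of_nonneg (Real.rpow_nonneg hs0.le _)]
        _ ≤ s ^ (r-1) * (‖T‖ * s⁻¹) :=
            mul_le_mul_of_nonneg_left (aux_op_norm_le hT hs0).2 (Real.rpow_nonneg hs0.le _)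
        _ = ‖T‖ * s ^ (r-2) := by
            rw [show r - 2 = (r-1) + (-1) by ring, Real.rpow_add hs0, Real.rpow_neg_one]
            ring

end Integrability

/-- Approximation error of Tikhonov regularization under the source condition `f★ = T^r h`
(Lemma A.2.1): `‖(T + λI)⁻¹ T f★ - f★‖ ≤ R · λ^r`. -/
theorem tikhonov_approximation_error
    {H : Type*} [NormedAddCommGroup H] [InnerProductSpace ℝ H] [CompleteSpace H]
    [TopologicalSpace.SeparableSpace H]
    (T : H →L[ℝ] H) (hT : T.IsPositive)
    (r lam R : ℝ) (hr : r ∈ Set.Ioc (0 : ℝ) 1) (hlam : lam ∈ Set.Ioo (0 : ℝ) 1)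
    (hR : 0 < R) (h : H) (hh : ‖h‖ ≤ R) :
    ‖opRpow (T + lam • 1) (-1) (T (opRpow T r h)) - opRpow T r h‖ ≤ R * lam ^ r := by
  obtain ⟨hr0, hr1⟩ := hr
  obtain ⟨hl0, hl1⟩ := hlam
  have hinv : opRpow (T + lam • 1) (-1) = Ring.inverse (T + lam • 1) := by
    rw [opRpow, if_neg (by norm_num)]
    norm_num [nnPow]
  have hkey : ∀ v : H, Ring.inverse (T + lam • 1) (T v) - v
      = -(lam • Ring.inverse (T + lam • 1) v) := by
    intro v
    have h1 : T v = (T + lam • 1) v - lam • v := by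
      simp only [ContinuousLinearMap.add_apply, ContinuousLinearMap.smul_apply,
        ContinuousLinearMap.one_apply]
      abel
    rw [h1, map_sub, _root_.map_smul, aux_inv_apply hT hl0]
    abel
  rw [hinv]
  rcases eq_or_lt_of_le hr1 with hr1' | hr1'
  · -- case r = 1
    subst hr1'
    have hT1 : opRpow T 1 = T := by
      rw [opRpow, if_pos zero_le_one]
      norm_num [nnPow]
    rw [hT1, hkey (T h), norm_neg, norm_smul, Real.norm_eq_abs, abs_of_pos hl0]
    calc lam * ‖Ring.inverse (T + lam • 1) (T h)‖ ≤ lam * ‖h‖ := aux_key1 hT hl0 h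
      _ ≤ lam * R := mul_le_mul_of_nonneg_left hh hl0.le
      _ = R * lam ^ (1:ℝ) := by rw [Real.rpow_one]; ring
  · -- case r < 1
    have hfr : opRpow T r = fracPow T r := by
      rw [opRpow, if_pos hr0.le, nnPow, Nat.floor_eq_zero.mpr hr1']
      simp [hr0.ne']
    rw [hfr, hkey (fracPow T r h), norm_neg, norm_smul, Real.norm_eq_abs, abs_of_pos hl0]
    set N := Ring.inverse (T + lam • 1) with hN
    set G : ℝ → H →L[ℝ] H := fun s => s ^ (r - 1) • (T * Ring.inverse (T + s • 1)) with hG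
    have hGi : MeasureTheory.IntegrableOn G (Set.Ioi 0) := aux_op_integrable hT hr0 hr1'
    have hsin : 0 < Real.sin (r * Real.pi) := by
      apply Real.sin_pos_of_pos_of_lt_pi (by positivity)
      nlinarith [Real.pi_pos]
    set κ := Real.sin (r * Real.pi) / Real.pi with hκ
    have hκpos : 0 < κ := div_pos hsin Real.pi_pos
    have hGih : MeasureTheory.Integrable (fun s => G s h)
        (MeasureTheory.volume.restrict (Set.Ioi 0)) := by
      have := (ContinuousLinearMap.apply ℝ H h).integrable_comp hGi
      simpa using this
    have hfrh : fracPow T r h = κ • ∫ s in Set.Ioi (0:ℝ), G s h := by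
      rw [fracPow]
      simp only [ContinuousLinearMap.smul_apply]
      rw [ContinuousLinearMap.integral_apply hGi h]
    have hNfrh : N (fracPow T r h) = κ • ∫ s in Set.Ioi (0:ℝ), N (G s h) := by
      rw [hfrh, _root_.map_smul, ContinuousLinearMap.integral_comp_comm N hGih]
    rw [hNfrh, norm_smul, Real.norm_eq_abs, abs_of_pos hκpos]
    have hpush : lam * (κ * ‖∫ s in Set.Ioi (0:ℝ), N (G s h)‖)
        = κ * ‖∫ s in Set.Ioi (0:ℝ), lam • N (G s h)‖ := by
      rw [MeasureTheory.integral_smul, norm_smul, Real.norm_eq_abs, abs_of_pos hl0]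
      ring
    rw [hpush]
    have hbound : ‖∫ s in Set.Ioi (0:ℝ), lam • N (G s h)‖
        ≤ ∫ s in Set.Ioi (0:ℝ), s ^ (r-1) * (lam / (lam + s)) * ‖h‖ := by
      apply MeasureTheory.norm_integral_le_of_norm_le
      · exact (aux_scalar_integrable hr0 hr1' hl0).mul_const ‖h‖
      · refine (MeasureTheory.ae_restrict_mem measurableSet_Ioi).mono fun s hs => ?_
        have hs0 : (0:ℝ) < s := hs
        have hGsh : G s h = s ^ (r-1) • (T (Ring.inverse (T + s • 1) h)) := by
          simp [hG, ContinuousLinearMap.smul_apply, ContinuousLinearMap.mul_apply]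
        rw [hGsh, _root_.map_smul, smul_comm, norm_smul (s ^ (r-1)),
          Real.norm_eq_abs, abs_of_nonneg (Real.rpow_nonneg hs0.le _)]
        rw [mul_assoc]
        apply mul_le_mul_of_nonneg_left _ (Real.rpow_nonneg hs0.le _)
        rw [norm_smul, Real.norm_eq_abs, abs_of_pos hl0]
        exact (aux_key hT hl0 hs0 h).trans_eq rfl
    have hval : ∫ s in Set.Ioi (0:ℝ), s ^ (r-1) * (lam / (lam + s)) * ‖h‖
        = (lam ^ r * (Real.pi / Real.sin (Real.pi * r))) * ‖h‖ := by
      rw [MeasureTheory.integral_mul_const, aux_subst hr0 hr1' hl0]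
    calc κ * ‖∫ s in Set.Ioi (0:ℝ), lam • N (G s h)‖
        ≤ κ * ((lam ^ r * (Real.pi / Real.sin (Real.pi * r))) * ‖h‖) := by
          apply mul_le_mul_of_nonneg_left _ hκpos.le
          rw [← hval]; exact hbound
      _ = lam ^ r * ‖h‖ := by
          rw [hκ, mul_comm r Real.pi]
          have hpi : Real.pi ≠ 0 := ne_of_gt Real.pi_pos
          have hs2 : Real.sin (Real.pi * r) ≠ 0 := by
            rw [mul_comm]; exact ne_of_gt hsin
          field_simp
      _ ≤ lam ^ r * R := mul_le_mul_of_nonneg_left hh (Real.rpow_nonneg hl0.le _)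
      _ = R * lam ^ r := by ring
end

section
/- Let τ ∈ (0,1), let Y be a real random variable with cumulative distribution function F(t) = P(Y ≤ t), and let ρ_τ(u) = u·(τ − 1{u ≤ 0}) be the check loss. Suppose F is c₁-Lipschitz for some c₁ > 0 (i.e., |F(s) − F(t)| ≤ c₁·|s − t| for all s, t), and let q ∈ ℝ satisfy F(q) = τ. Then for every b ∈ ℝ, E[ρ_τ(Y − b) − ρ_τ(Y − q)] ≤ (c₁/2)·(b − q)². -/
open MeasureTheory
open scoped RealInnerProductSpace ENNReal

/-- The check (pinball) loss at quantile level `τ`: `ρ_τ(u) = u * (τ - 1{u ≤ 0})`. -/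
noncomputable def checkLoss (τ u : ℝ) : ℝ := u * (τ - if u ≤ 0 then 1 else 0)

lemma checkLoss_eq (τ u : ℝ) : u * (τ - if u ≤ 0 then 1 else 0) = τ * u + max (-u) 0 := by
  rcases le_or_gt u 0 with h | h
  · rw [if_pos h, max_eq_left (by linarith)]; ring
  · rw [if_neg (by linarith), max_eq_right (by linarith)]; ring

lemma indInt (a b y : ℝ) (hab : a ≤ b) :
    ∫ t in Set.Ioc a b, (if y ≤ t then (1:ℝ) else 0) = max (b - y) 0 - max (a - y) 0 := by
  have h1 : (fun t => if y ≤ t then (1:ℝ) else 0) = (Set.Ici y).indicator (fun _ => 1) := by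
    funext t; simp [Set.indicator_apply]
  rw [h1, setIntegral_indicator measurableSet_Ici]
  rcases le_or_gt y a with h | h
  · have hset : Set.Ioc a b ∩ Set.Ici y = Set.Ioc a b :=
      Set.inter_eq_left.2 (fun t ht => le_trans h (le_of_lt ht.1))
    rw [hset, setIntegral_const, measureReal_def, Real.volume_Ioc, smul_eq_mul, mul_one,
      ENNReal.toReal_ofReal (by linarith), max_eq_left (by linarith), max_eq_left (by linarith)]
    ring
  · rcases le_or_gt y b with h2 | h2
    · have hset : Set.Ioc a b ∩ Set.Ici y = Set.Icc y b := by
        ext t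
        constructor
        · rintro ⟨⟨_, htb⟩, hyt⟩; exact ⟨hyt, htb⟩
        · rintro ⟨hyt, htb⟩; exact ⟨⟨lt_of_lt_of_le h hyt, htb⟩, hyt⟩
      rw [hset, setIntegral_const, measureReal_def, Real.volume_Icc, smul_eq_mul, mul_one,
        ENNReal.toReal_ofReal (by linarith), max_eq_left (by linarith),
        max_eq_right (by linarith)]
      ring
    · have hset : Set.Ioc a b ∩ Set.Ici y = ∅ := by
        rw [Set.eq_empty_iff_forall_notMem]
        rintro t ⟨⟨_, htb⟩, hyt⟩
        exact absurd (le_trans (Set.mem_Ici.1 hyt) htb) (not_le.2 h2)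
      rw [hset, Measure.restrict_empty, integral_zero_measure,
        max_eq_right (by linarith), max_eq_right (by linarith)]
      ring

lemma maxInt {Ω : Type*} [MeasurableSpace Ω] (P : Measure Ω) [IsProbabilityMeasure P]
    (Y : Ω → ℝ) (hY : Measurable Y) (a b : ℝ) (hab : a ≤ b) :
    Integrable (fun ω => max (b - Y ω) 0 - max (a - Y ω) 0) P := by
  have hm : Measurable (fun ω => max (b - Y ω) 0 - max (a - Y ω) 0) :=
    ((measurable_const.sub hY).max measurable_const).sub
      ((measurable_const.sub hY).max measurable_const)
  refine (integrable_const (b - a)).mono' hm.aestronglyMeasurable ?_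
  refine Filter.Eventually.of_forall fun ω => ?_
  rw [Real.norm_eq_abs, abs_le]
  constructor
  · have h1 : max (a - Y ω) 0 ≤ max (b - Y ω) 0 := max_le_max (by linarith) le_rfl
    linarith
  · have h2 : max (b - Y ω) 0 ≤ max (a - Y ω) 0 + (b - a) :=
      max_le (by nlinarith [le_max_left (a - Y ω) (0:ℝ)])
        (by nlinarith [le_max_right (a - Y ω) (0:ℝ)])
    have h3 : (0:ℝ) ≤ max (a - Y ω) 0 := le_max_right _ _
    linarith

lemma key {Ω : Type*} [MeasurableSpace Ω] (P : Measure Ω) [IsProbabilityMeasure P]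
    (Y : Ω → ℝ) (hY : Measurable Y) (a b : ℝ) (hab : a ≤ b) :
    ∫ ω, (max (b - Y ω) 0 - max (a - Y ω) 0) ∂P
      = ∫ t in Set.Ioc a b, (P {ω | Y ω ≤ t}).toReal := by
  set μ := (volume : Measure ℝ).restrict (Set.Ioc a b) with hμdef
  haveI : IsFiniteMeasure μ := ⟨by
    rw [hμdef, Measure.restrict_apply_univ, Real.volume_Ioc]; exact ENNReal.ofReal_lt_top⟩
  have hS : MeasurableSet {p : Ω × ℝ | Y p.1 ≤ p.2} :=
    measurableSet_le (hY.comp measurable_fst) measurable_snd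
  have hind : (fun p : Ω × ℝ => if Y p.1 ≤ p.2 then (1:ℝ) else 0)
      = Set.indicator {p : Ω × ℝ | Y p.1 ≤ p.2} (fun _ => 1) := by
    funext p; simp [Set.indicator_apply]
  have hint : Integrable (fun p : Ω × ℝ => if Y p.1 ≤ p.2 then (1:ℝ) else 0) (P.prod μ) := by
    rw [hind]; exact (integrable_const 1).indicator hS
  have hswap := integral_integral_swap (f := fun ω t => if Y ω ≤ t then (1:ℝ) else 0) hint
  calc ∫ ω, (max (b - Y ω) 0 - max (a - Y ω) 0) ∂P
      = ∫ ω, (∫ t, (if Y ω ≤ t then (1:ℝ) else 0) ∂μ) ∂P := by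
        refine integral_congr_ae (Filter.Eventually.of_forall fun ω => ?_)
        exact (indInt a b (Y ω) hab).symm
    _ = ∫ t, (∫ ω, (if Y ω ≤ t then (1:ℝ) else 0) ∂P) ∂μ := hswap
    _ = ∫ t in Set.Ioc a b, (P {ω | Y ω ≤ t}).toReal := by
        refine integral_congr_ae (Filter.Eventually.of_forall fun t => ?_)
        have : (fun ω => if Y ω ≤ t then (1:ℝ) else 0)
            = Set.indicator {ω | Y ω ≤ t} (fun _ => 1) := by
          funext ω; simp [Set.indicator_apply]
        simp only []
        have hms : MeasurableSet {ω | Y ω ≤ t} := hY measurableSet_Iic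
        rw [this, integral_indicator_const (1:ℝ) hms, smul_eq_mul, mul_one]
        rfl

lemma lin_int (c m a b : ℝ) : ∫ t in a..b, (c + m * t) = (c*b + m*b^2/2) - (c*a + m*a^2/2) := by
  have hd : ∀ t ∈ Set.uIcc a b, HasDerivAt (fun t => c*t + m*t^2/2) (c + m * t) t := by
    intro t _
    have h := ((hasDerivAt_id t).const_mul c).add (((hasDerivAt_pow 2 t).const_mul m).div_const 2)
    exact h.congr_deriv (by simp; ring)
  rw [intervalIntegral.integral_eq_sub_of_hasDerivAt hd
    ((by fun_prop : Continuous fun t : ℝ => c + m * t).intervalIntegrable _ _)]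

/-- Excess quantile risk is bounded by the squared distance to the quantile when the cdf is
`c₁`-Lipschitz. -/
theorem excess_quantile_risk_upper_bound
    {Ω : Type*} [MeasurableSpace Ω] (P : Measure Ω) [IsProbabilityMeasure P]
    (τ : ℝ) (hτ : τ ∈ Set.Ioo (0 : ℝ) 1)
    (Y : Ω → ℝ) (hY : Measurable Y)
    (F : ℝ → ℝ) (hF : ∀ t, F t = (P {ω | Y ω ≤ t}).toReal)
    (c₁ : ℝ) (hc₁ : 0 < c₁) (hLip : ∀ s t, |F s - F t| ≤ c₁ * |s - t|)
    (q : ℝ) (hq : F q = τ) (b : ℝ) :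
    ∫ ω, (checkLoss τ (Y ω - b) - checkLoss τ (Y ω - q)) ∂P ≤ c₁ / 2 * (b - q)^2 := by
  have hFc : Continuous F := by
    have : LipschitzWith c₁.toNNReal F := by
      refine LipschitzWith.of_dist_le_mul fun s t => ?_
      rw [Real.dist_eq, Real.dist_eq, Real.coe_toNNReal c₁ hc₁.le]
      exact hLip s t
    exact this.continuous
  have hpt : ∀ ω, checkLoss τ (Y ω - b) - checkLoss τ (Y ω - q)
      = (-(τ * (b - q))) + (max (b - Y ω) 0 - max (q - Y ω) 0) := by
    intro ω
    unfold checkLoss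
    rw [checkLoss_eq, checkLoss_eq, neg_sub, neg_sub]
    ring
  rw [integral_congr_ae (Filter.Eventually.of_forall hpt)]
  rcases le_total q b with hqb | hbq
  · have hIntM := maxInt P Y hY q b hqb
    rw [integral_add (integrable_const _) hIntM, integral_const, key P Y hY q b hqb]
    have hFeq : ∫ t in Set.Ioc q b, (P {ω | Y ω ≤ t}).toReal = ∫ t in Set.Ioc q b, F t := by
      refine integral_congr_ae (Filter.Eventually.of_forall fun t => ?_)
      exact (hF t).symm
    rw [hFeq]
    have hbound : ∫ t in Set.Ioc q b, F t ≤ ∫ t in Set.Ioc q b, (τ + c₁ * (t - q)) := by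
      refine setIntegral_mono_on (hFc.integrableOn_Ioc)
        ((continuous_const.add (continuous_const.mul (continuous_id.sub continuous_const))).integrableOn_Ioc)
        measurableSet_Ioc (fun t ht => ?_)
      have h := hLip t q
      rw [abs_le] at h
      have habs : |t - q| = t - q := abs_of_nonneg (by linarith [ht.1])
      rw [habs] at h
      linarith [h.2, hq ▸ le_refl τ]
    have hcomp : ∫ t in Set.Ioc q b, (τ + c₁ * (t - q))
        = τ * (b - q) + c₁ / 2 * (b - q)^2 := by
      rw [← intervalIntegral.integral_of_le hqb]
      have : (fun t => τ + c₁ * (t - q)) = fun t => (τ - c₁ * q) + c₁ * t := by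
        funext t; ring
      rw [this, lin_int]
      ring
    simp only [measure_univ, ENNReal.toReal_one, probReal_univ, smul_eq_mul, one_mul]
    linarith
  · have hIntM := maxInt P Y hY b q hbq
    have hneg : ∀ ω : Ω, (-(τ * (b - q))) + (max (b - Y ω) 0 - max (q - Y ω) 0)
        = (-(τ * (b - q))) - (max (q - Y ω) 0 - max (b - Y ω) 0) := fun ω => by ring
    rw [integral_congr_ae (Filter.Eventually.of_forall fun ω => hneg ω),
      integral_sub (integrable_const _) hIntM, integral_const,
      key P Y hY b q hbq]
    have hFeq : ∫ t in Set.Ioc b q, (P {ω | Y ω ≤ t}).toReal = ∫ t in Set.Ioc b q, F t := by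
      refine integral_congr_ae (Filter.Eventually.of_forall fun t => ?_)
      exact (hF t).symm
    rw [hFeq]
    have hbound : ∫ t in Set.Ioc b q, (τ - c₁ * (q - t)) ≤ ∫ t in Set.Ioc b q, F t := by
      refine setIntegral_mono_on
        ((continuous_const.sub (continuous_const.mul (continuous_const.sub continuous_id))).integrableOn_Ioc)
        (hFc.integrableOn_Ioc) measurableSet_Ioc (fun t ht => ?_)
      have h := hLip q t
      rw [abs_le] at h
      have habs : |q - t| = q - t := abs_of_nonneg (by linarith [ht.2])
      rw [habs] at h
      linarith [h.2, hq ▸ le_refl τ]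
    have hcomp : ∫ t in Set.Ioc b q, (τ - c₁ * (q - t))
        = τ * (q - b) - c₁ / 2 * (q - b)^2 := by
      rw [← intervalIntegral.integral_of_le hbq]
      have : (fun t => τ - c₁ * (q - t)) = fun t => (τ - c₁ * q) + c₁ * t := by
        funext t; ring
      rw [this, lin_int]
      ring
    simp only [measure_univ, ENNReal.toReal_one, probReal_univ, smul_eq_mul, one_mul]
    nlinarith [sq_nonneg (b - q)]
end

section
/- Let τ ∈ (0,1), let Y be a real random variable with cumulative distribution function F(t) = P(Y ≤ t), and let ρ_τ(u) = u·(τ − 1{u ≤ 0}) be the check loss. Suppose F is c₁-Lipschitz for some c₁ > 0, and let q ∈ ℝ satisfy F(q) = τ. Let a, b ∈ ℝ and c₂ > 0 be such that |F(a + δ) − F(a)| ≥ c₂·|δ| for every δ with |δ| ≤ |b − a|. Then E[ρ_τ(Y − b) − ρ_τ(Y − a)] ≥ (c₂/2)·(b − a)² − c₁·|b − a|·|a − q|. -/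
open MeasureTheory
open scoped RealInnerProductSpace ENNReal

/-- Knight-type pointwise decomposition of the check loss difference. -/
lemma checkLoss_sub_eq (τ a b y : ℝ) :
    checkLoss τ (y - b) - checkLoss τ (y - a)
      = τ * (a - b) + (max 0 (b - y) - max 0 (a - y)) := by
  unfold checkLoss
  by_cases hb : y - b ≤ 0 <;> by_cases ha : y - a ≤ 0
  · rw [if_pos hb, if_pos ha, max_eq_right (by linarith : (0:ℝ) ≤ b - y),
      max_eq_right (by linarith : (0:ℝ) ≤ a - y)]
    ring
  · rw [if_pos hb, if_neg ha, max_eq_right (by linarith : (0:ℝ) ≤ b - y),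
      max_eq_left (by linarith : a - y ≤ 0)]
    ring
  · rw [if_neg hb, if_pos ha, max_eq_left (by linarith : b - y ≤ 0),
      max_eq_right (by linarith : (0:ℝ) ≤ a - y)]
    ring
  · rw [if_neg hb, if_neg ha, max_eq_left (by linarith : b - y ≤ 0),
      max_eq_left (by linarith : a - y ≤ 0)]
    ring

/-- Layercake computation: expectation of the clipped ramp equals the integral of the CDF. -/
lemma ramp_integral {Ω : Type*} [MeasurableSpace Ω] (P : Measure Ω) [IsProbabilityMeasure P]
    (Y : Ω → ℝ) (hY : Measurable Y) (a b : ℝ) (hab : a ≤ b) :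
    ∫ ω, (max 0 (b - Y ω) - max 0 (a - Y ω)) ∂P
      = ∫ t in a..b, (P {ω | Y ω ≤ t}).toReal := by
  have hg_nn : ∀ y : ℝ, 0 ≤ max 0 (b - y) - max 0 (a - y) := fun y =>
    sub_nonneg.2 (max_le_max le_rfl (by linarith))
  have hg_bdd : ∀ y : ℝ, max 0 (b - y) - max 0 (a - y) ≤ b - a := by
    intro y
    have h1 : (0:ℝ) ≤ (b - a) + max 0 (a - y) :=
      add_nonneg (by linarith) (le_max_left _ _)
    have h2 : b - y ≤ (b - a) + max 0 (a - y) := by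
      have := le_max_right 0 (a - y); linarith
    have := max_le h1 h2
    linarith
  have hg_meas : Measurable fun ω => max 0 (b - Y ω) - max 0 (a - Y ω) :=
    (measurable_const.max (measurable_const.sub hY)).sub
      (measurable_const.max (measurable_const.sub hY))
  have hint : Integrable (fun ω => max 0 (b - Y ω) - max 0 (a - Y ω)) P := by
    refine (integrable_const (b - a)).mono' hg_meas.aestronglyMeasurable ?_
    filter_upwards with ω
    rw [Real.norm_eq_abs, abs_of_nonneg (hg_nn _)]
    exact hg_bdd _
  rw [hint.integral_eq_integral_Ioc_meas_le
      (Filter.Eventually.of_forall fun ω => hg_nn _)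
      (Filter.Eventually.of_forall fun ω => hg_bdd _)]
  have hsets : ∀ t ∈ Set.Ioc (0:ℝ) (b - a),
      (P {ω | t ≤ max 0 (b - Y ω) - max 0 (a - Y ω)}).toReal
        = (P {ω | Y ω ≤ b - t}).toReal := by
    intro t ht
    have hseteq : {ω | t ≤ max 0 (b - Y ω) - max 0 (a - Y ω)} = {ω | Y ω ≤ b - t} := by
      ext ω
      simp only [Set.mem_setOf_eq]
      constructor
      · intro h
        by_contra hy
        push_neg at hy
        have h1 : max 0 (b - Y ω) < t := max_lt ht.1 (by linarith)
        have h2 : (0:ℝ) ≤ max 0 (a - Y ω) := le_max_left _ _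
        linarith
      · intro h
        rcases le_or_gt (Y ω) a with hya | hya
        · rw [max_eq_right (by linarith : (0:ℝ) ≤ b - Y ω),
            max_eq_right (by linarith : (0:ℝ) ≤ a - Y ω)]
          linarith [ht.2]
        · rw [max_eq_right (by linarith [ht.1] : (0:ℝ) ≤ b - Y ω),
            max_eq_left (by linarith : a - Y ω ≤ 0)]
          linarith
    rw [hseteq]
  simp only [measureReal_def]
  rw [setIntegral_congr_fun measurableSet_Ioc hsets,
    ← intervalIntegral.integral_of_le (by linarith : (0:ℝ) ≤ b - a),
    intervalIntegral.integral_comp_sub_left (fun t => (P {ω | Y ω ≤ t}).toReal) b]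
  norm_num

/-- Adaptive local strong convexity of the expected check loss around an approximate quantile
(scalar core of Lemma A.2.4). -/
theorem check_loss_local_strong_convexity
    {Ω : Type*} [MeasurableSpace Ω] (P : Measure Ω) [IsProbabilityMeasure P]
    (τ : ℝ) (hτ : τ ∈ Set.Ioo (0 : ℝ) 1)
    (Y : Ω → ℝ) (hY : Measurable Y)
    (F : ℝ → ℝ) (hF : ∀ t, F t = (P {ω | Y ω ≤ t}).toReal)
    (c₁ : ℝ) (hc₁ : 0 < c₁) (hLip : ∀ s t, |F s - F t| ≤ c₁ * |s - t|)
    (q : ℝ) (hq : F q = τ)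
    (a b c₂ : ℝ) (hc₂ : 0 < c₂)
    (hcal : ∀ d : ℝ, |d| ≤ |b - a| → c₂ * |d| ≤ |F (a + d) - F a|) :
    c₂ / 2 * (b - a)^2 - c₁ * |b - a| * |a - q| ≤
      ∫ ω, (checkLoss τ (Y ω - b) - checkLoss τ (Y ω - a)) ∂P := by
  -- Monotonicity of F
  have hFmono : Monotone F := by
    intro s t hst
    rw [hF s, hF t]
    exact ENNReal.toReal_mono (measure_ne_top _ _)
      (measure_mono fun ω (h : Y ω ≤ s) => le_trans h hst)
  -- Continuity of F
  have hFcont : Continuous F := by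
    refine (LipschitzWith.of_dist_le_mul (K := Real.toNNReal c₁) fun s t => ?_).continuous
    rw [Real.dist_eq, Real.dist_eq, Real.coe_toNNReal c₁ hc₁.le]
    exact hLip s t
  -- rewrite the expectation
  have hgmeas : Measurable fun ω => max 0 (b - Y ω) - max 0 (a - Y ω) :=
    (measurable_const.max (measurable_const.sub hY)).sub
      (measurable_const.max (measurable_const.sub hY))
  have hgint : Integrable (fun ω => max 0 (b - Y ω) - max 0 (a - Y ω)) P := by
    refine (integrable_const |b - a|).mono' hgmeas.aestronglyMeasurable ?_
    filter_upwards with ω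
    rw [Real.norm_eq_abs]
    have h := abs_max_sub_max_le_abs (b - Y ω) (a - Y ω) 0
    rw [max_comm (b - Y ω) 0, max_comm (a - Y ω) 0,
      show b - Y ω - (a - Y ω) = b - a by ring] at h
    exact h
  have hrw : ∫ ω, (checkLoss τ (Y ω - b) - checkLoss τ (Y ω - a)) ∂P
      = τ * (a - b) + ∫ ω, (max 0 (b - Y ω) - max 0 (a - Y ω)) ∂P := by
    rw [show (fun ω => checkLoss τ (Y ω - b) - checkLoss τ (Y ω - a))
        = fun ω => τ * (a - b) + (max 0 (b - Y ω) - max 0 (a - Y ω)) from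
        funext fun ω => checkLoss_sub_eq τ a b (Y ω)]
    rw [integral_add (integrable_const _) hgint, integral_const]
    simp
  -- the ramp expectation equals ∫ t in a..b, F t
  have hramp : ∫ ω, (max 0 (b - Y ω) - max 0 (a - Y ω)) ∂P = ∫ t in a..b, F t := by
    rcases le_or_gt a b with hab | hab
    · rw [ramp_integral P Y hY a b hab]
      exact intervalIntegral.integral_congr fun t _ => (hF t).symm
    · have hneg : (fun ω => max 0 (b - Y ω) - max 0 (a - Y ω))
          = fun ω => -(max 0 (a - Y ω) - max 0 (b - Y ω)) := by
        funext ω; rw [neg_sub]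
      have h1 : ∫ t in b..a, (P {ω | Y ω ≤ t}).toReal = ∫ t in b..a, F t :=
        intervalIntegral.integral_congr fun t _ => (hF t).symm
      rw [hneg, integral_neg, ramp_integral P Y hY b a hab.le, h1,
        intervalIntegral.integral_symm b a]
  -- interval integrability facts
  have hFint : ∀ u v : ℝ, IntervalIntegrable F MeasureTheory.volume u v :=
    fun u v => hFcont.intervalIntegrable u v
  have hlin : ∀ u v : ℝ, IntervalIntegrable (fun t => F a + c₂ * (t - a))
      MeasureTheory.volume u v :=
    fun u v => (continuous_const.add (continuous_const.mul
      (continuous_id.sub continuous_const))).intervalIntegrable u v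
  -- value of the linear integral
  have hlinval : ∀ u v : ℝ, ∫ t in u..v, (F a + c₂ * (t - a))
      = (v - u) * F a + c₂ * ((v - a)^2 - (u - a)^2) / 2 := by
    intro u v
    have hfun : (fun t : ℝ => F a + c₂ * (t - a)) = fun t : ℝ => (F a - c₂ * a) + c₂ * t := by
      funext t; ring
    have hint2 : IntervalIntegrable (fun t : ℝ => c₂ * t) MeasureTheory.volume u v := by
      apply Continuous.intervalIntegrable
      continuity
    rw [hfun, intervalIntegral.integral_add intervalIntegrable_const hint2,
      intervalIntegral.integral_const_mul, integral_id, intervalIntegral.integral_const]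
    simp only [smul_eq_mul]
    ring
  -- key bound on the CDF integral
  have hkey : (b - a) * F a + c₂ / 2 * (b - a)^2 ≤ ∫ t in a..b, F t := by
    rcases le_or_gt a b with hab | hab
    · have hmono : ∀ t ∈ Set.Icc a b, F a + c₂ * (t - a) ≤ F t := by
        intro t ht
        have hd : |t - a| ≤ |b - a| := by
          rw [abs_of_nonneg (by linarith [ht.1] : (0:ℝ) ≤ t - a),
            abs_of_nonneg (by linarith : (0:ℝ) ≤ b - a)]
          linarith [ht.2]
        have hc := hcal (t - a) hd
        rw [show a + (t - a) = t by ring] at hc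
        rw [abs_of_nonneg (by linarith [ht.1] : (0:ℝ) ≤ t - a)] at hc
        have hFle : F a ≤ F t := hFmono (by linarith [ht.1])
        rw [abs_of_nonneg (by linarith : (0:ℝ) ≤ F t - F a)] at hc
        linarith
      have hle := intervalIntegral.integral_mono_on hab (hlin a b) (hFint a b) hmono
      rw [hlinval a b] at hle
      nlinarith [hle]
    · have hmono : ∀ t ∈ Set.Icc b a, F t ≤ F a + c₂ * (t - a) := by
        intro t ht
        have hd : |t - a| ≤ |b - a| := by
          rw [abs_of_nonpos (by linarith [ht.2] : t - a ≤ 0),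
            abs_of_nonpos (by linarith : b - a ≤ 0)]
          linarith [ht.1]
        have hc := hcal (t - a) hd
        rw [show a + (t - a) = t by ring] at hc
        rw [abs_of_nonpos (by linarith [ht.2] : t - a ≤ 0)] at hc
        have hFle : F t ≤ F a := hFmono ht.2
        rw [abs_of_nonpos (by linarith : F t - F a ≤ 0)] at hc
        linarith
      have hle := intervalIntegral.integral_mono_on hab.le (hFint b a) (hlin b a) hmono
      rw [hlinval b a] at hle
      rw [intervalIntegral.integral_symm b a]
      nlinarith [hle]
  -- first-order term bound
  have hfo : -(c₁ * |b - a| * |a - q|) ≤ τ * (a - b) + (b - a) * F a := by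
    have h1 : τ * (a - b) + (b - a) * F a = (b - a) * (F a - F q) := by
      rw [hq]; ring
    have h2 : |(b - a) * (F a - F q)| ≤ c₁ * |b - a| * |a - q| := by
      rw [abs_mul]
      calc |b - a| * |F a - F q| ≤ |b - a| * (c₁ * |a - q|) :=
            mul_le_mul_of_nonneg_left (hLip a q) (abs_nonneg _)
        _ = c₁ * |b - a| * |a - q| := by ring
    have h3 := neg_abs_le ((b - a) * (F a - F q))
    linarith
  rw [hrw, hramp]
  linarith [hkey, hfo]
end

section
/- Let H be a separable real Hilbert space, T a bounded positive self-adjoint operator on H, λ > 0, and r ∈ [1/2, 1]. Then in the Loewner order, λ^{2−2r}·T^{2r} ≤ (2 − 2r)·λ·T + (2r − 1)·T², i.e., the operator (2 − 2r)·λ·T + (2r − 1)·T² − λ^{2−2r}·T^{2r} is positive. -/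
open MeasureTheory
open scoped RealInnerProductSpace ENNReal

set_option synthInstance.maxHeartbeats 400000
set_option maxHeartbeats 1000000

open MeasureTheory ContinuousLinearMap Set Filter
open scoped Real Topology

namespace OpYoungAux

variable {H : Type*} [NormedAddCommGroup H] [InnerProductSpace ℝ H] [CompleteSpace H]
variable {T : H →L[ℝ] H} {s α lam : ℝ}

lemma inner_shift_ge (hT : T.IsPositive) (hs : 0 < s) (x : H) :
    s * ‖x‖ ^ 2 ≤ ⟪(T + s • (1 : H →L[ℝ] H)) x, x⟫ := by
  have h : (0:ℝ) ≤ ⟪T x, x⟫ := hT.inner_nonneg_left x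
  simp only [add_apply, smul_apply, ContinuousLinearMap.one_apply, inner_add_left, inner_smul_left,
    real_inner_self_eq_norm_sq, RCLike.star_def, conj_trivial]
  nlinarith

lemma isUnit_shift (hT : T.IsPositive) (hs : 0 < s) :
    IsUnit (T + s • (1 : H →L[ℝ] H)) := by
  apply isUnit_of_forall_le_norm_inner_map _ (c := ⟨s, hs.le⟩) (by exact_mod_cast hs)
  intro x
  calc ‖x‖ ^ 2 * s = s * ‖x‖ ^ 2 := mul_comm _ _
    _ ≤ ⟪(T + s • (1 : H →L[ℝ] H)) x, x⟫ := inner_shift_ge hT hs x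
    _ ≤ ‖⟪(T + s • (1 : H →L[ℝ] H)) x, x⟫‖ := le_abs_self _

/-- The resolvent `(T + s)⁻¹`. -/
noncomputable def Rs (T : H →L[ℝ] H) (s : ℝ) : H →L[ℝ] H :=
  Ring.inverse (T + s • (1 : H →L[ℝ] H))

lemma shift_mul_Rs (hT : T.IsPositive) (hs : 0 < s) :
    (T + s • (1 : H →L[ℝ] H)) * Rs T s = 1 :=
  Ring.mul_inverse_cancel _ (isUnit_shift hT hs)

lemma Rs_mul_shift (hT : T.IsPositive) (hs : 0 < s) :
    Rs T s * (T + s • (1 : H →L[ℝ] H)) = 1 :=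
  Ring.inverse_mul_cancel _ (isUnit_shift hT hs)

lemma shift_apply_Rs (hT : T.IsPositive) (hs : 0 < s) (x : H) :
    (T + s • (1 : H →L[ℝ] H)) (Rs T s x) = x := by
  have := congrArg (fun A => A x) (shift_mul_Rs hT hs)
  simpa [mul_apply] using this

lemma Rs_comm (hT : T.IsPositive) (hs : 0 < s) : T * Rs T s = Rs T s * T := by
  have h1 := shift_mul_Rs hT hs
  have h2 := Rs_mul_shift hT hs
  have key : (T + s • (1 : H →L[ℝ] H)) * Rs T s = Rs T s * (T + s • (1 : H →L[ℝ] H)) := by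
    rw [h1, h2]
  have := key
  simp only [add_mul, mul_add, smul_mul_assoc, mul_smul_comm, one_mul, mul_one] at this
  exact add_right_cancel this

lemma norm_Rs_apply_le (hT : T.IsPositive) (hs : 0 < s) (y : H) :
    ‖Rs T s y‖ ≤ s⁻¹ * ‖y‖ := by
  have h1 : s * ‖Rs T s y‖ ^ 2 ≤ ⟪(T + s • (1 : H →L[ℝ] H)) (Rs T s y), Rs T s y⟫ :=
    inner_shift_ge hT hs _
  rw [shift_apply_Rs hT hs] at h1
  have h2 : ⟪y, Rs T s y⟫ ≤ ‖y‖ * ‖Rs T s y‖ := real_inner_le_norm _ _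
  rcases eq_or_lt_of_le (norm_nonneg (Rs T s y)) with h | h
  · rw [← h]; positivity
  · rw [inv_mul_eq_div, le_div_iff₀ hs]
    nlinarith

lemma norm_Rs_le (hT : T.IsPositive) (hs : 0 < s) : ‖Rs T s‖ ≤ s⁻¹ :=
  opNorm_le_bound _ (by positivity) (norm_Rs_apply_le hT hs)

lemma T_mul_Rs_eq (hT : T.IsPositive) (hs : 0 < s) :
    T * Rs T s = 1 - s • Rs T s := by
  have h := shift_mul_Rs hT hs
  rw [add_mul, smul_mul_assoc, one_mul] at h
  linear_combination (norm := module) h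

lemma norm_T_mul_Rs_le_two (hT : T.IsPositive) (hs : 0 < s) :
    ‖T * Rs T s‖ ≤ 2 := by
  rw [T_mul_Rs_eq hT hs]
  calc ‖(1 : H →L[ℝ] H) - s • Rs T s‖ ≤ ‖(1 : H →L[ℝ] H)‖ + ‖s • Rs T s‖ := norm_sub_le _ _
    _ ≤ 1 + 1 := by
        gcongr
        · exact norm_id_le
        · rw [norm_smul s (Rs T s), Real.norm_eq_abs, abs_of_pos hs]
          calc s * ‖Rs T s‖ ≤ s * s⁻¹ := by
                have := norm_Rs_le hT hs
                gcongr
            _ = 1 := mul_inv_cancel₀ hs.ne' 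
    _ = 2 := by norm_num

lemma star_shift (hT : T.IsPositive) :
    star (T + s • (1 : H →L[ℝ] H)) = T + s • (1 : H →L[ℝ] H) := by
  rw [star_add, star_smul, star_one, hT.isSelfAdjoint.star_eq, star_trivial]

lemma isSelfAdjoint_Rs (hT : T.IsPositive) (hs : 0 < s) :
    IsSelfAdjoint (Rs T s) := by
  have h1 : star (Rs T s) * (T + s • (1 : H →L[ℝ] H)) = 1 := by
    have := congrArg star (shift_mul_Rs hT hs)
    rwa [star_mul, star_shift hT, star_one] at this
  calc star (Rs T s) = star (Rs T s) * ((T + s • (1 : H →L[ℝ] H)) * Rs T s) := by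
        rw [shift_mul_Rs hT hs, mul_one]
    _ = (star (Rs T s) * (T + s • (1 : H →L[ℝ] H))) * Rs T s := by rw [mul_assoc]
    _ = Rs T s := by rw [h1, one_mul]

lemma inner_T_mul_Rs_nonneg (hT : T.IsPositive) (hs : 0 < s) (y : H) :
    0 ≤ ⟪(T * Rs T s) y, y⟫ := by
  have hy : y = T (Rs T s y) + s • Rs T s y := by
    have := shift_apply_Rs hT hs y
    simpa [add_apply, smul_apply, one_apply] using this.symm
  rw [ContinuousLinearMap.mul_apply]
  nth_rewrite 2 [hy]
  rw [inner_add_right, real_inner_smul_right]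
  have h1 : (0:ℝ) ≤ ⟪T (Rs T s y), Rs T s y⟫ := hT.inner_nonneg_left _
  have h2 : (0:ℝ) ≤ ⟪T (Rs T s y), T (Rs T s y)⟫ := real_inner_self_nonneg
  nlinarith

lemma poly_identity {lam u : ℝ} (hlam : 0 < lam) (hu : 0 < u) (T : H →L[ℝ] H) :
    (1/(1+u)^2) • (T*(T + (lam*u) • (1:H →L[ℝ] H))) +
      (u/(lam*(1+u)^2)) • (T*T*(T + (lam*u) • (1:H →L[ℝ] H))) - T*T
      = (u/(lam*(1+u)^2)) • ((T - lam•(1:H →L[ℝ] H)) * (T * (T - lam•(1:H →L[ℝ] H)))) := by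
  have h1 : (0:ℝ) < 1 + u := by linarith
  simp only [mul_add, add_mul, sub_mul, mul_sub, mul_smul_comm, smul_mul_assoc, mul_one,
    one_mul, mul_assoc, smul_smul, smul_sub, smul_add]
  match_scalars <;> field_simp <;> ring

lemma shift_comm_sub {lam u : ℝ} (T : H →L[ℝ] H) :
    (T - lam•(1:H →L[ℝ] H)) * (T + (lam*u) • (1:H →L[ℝ] H))
      = (T + (lam*u) • (1:H →L[ℝ] H)) * (T - lam•(1:H →L[ℝ] H)) := by
  simp only [mul_add, add_mul, sub_mul, mul_sub, mul_smul_comm, smul_mul_assoc, mul_one, one_mul]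
  module

lemma key_identity (hT : T.IsPositive) {lam u : ℝ} (hlam : 0 < lam) (hu : 0 < u) :
    (1/(1+u)^2) • T + (u/(lam*(1+u)^2)) • (T*T) - T*T*Rs T (lam*u)
      = (u/(lam*(1+u)^2)) •
          ((T - lam•(1:H →L[ℝ] H)) * ((T * Rs T (lam*u)) * (T - lam•(1:H →L[ℝ] H)))) := by
  have hl : 0 < lam*u := mul_pos hlam hu
  refine (isUnit_shift hT hl).mul_right_cancel ?_
  have hR := Rs_mul_shift hT hl
  calc ((1/(1+u)^2) • T + (u/(lam*(1+u)^2)) • (T*T) - T*T*Rs T (lam*u)) *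
          (T + (lam*u) • (1:H →L[ℝ] H))
      = (1/(1+u)^2) • (T*(T + (lam*u) • (1:H →L[ℝ] H))) +
          (u/(lam*(1+u)^2)) • (T*T*(T + (lam*u) • (1:H →L[ℝ] H)))
          - (T*T)*(Rs T (lam*u) * (T + (lam*u) • (1:H →L[ℝ] H))) := by
        simp only [sub_mul, add_mul, smul_mul_assoc, mul_assoc]
    _ = (u/(lam*(1+u)^2)) • ((T - lam•(1:H →L[ℝ] H)) * (T * (T - lam•(1:H →L[ℝ] H)))) := by
        rw [hR, mul_one]; exact poly_identity hlam hu T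
    _ = (u/(lam*(1+u)^2)) •
          ((T - lam•(1:H →L[ℝ] H)) * ((T * Rs T (lam*u)) * ((T - lam•(1:H →L[ℝ] H)) *
            (T + (lam*u) • (1:H →L[ℝ] H))))) := by
        rw [shift_comm_sub, ← mul_assoc (T * Rs T (lam*u)), mul_assoc T (Rs T (lam*u)), hR,
          mul_one]
    _ = ((u/(lam*(1+u)^2)) •
          ((T - lam•(1:H →L[ℝ] H)) * ((T * Rs T (lam*u)) * (T - lam•(1:H →L[ℝ] H))))) *
          (T + (lam*u) • (1:H →L[ℝ] H)) := by
        simp only [smul_mul_assoc, mul_assoc]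

lemma key_pointwise (hT : T.IsPositive) {lam u : ℝ} (hlam : 0 < lam) (hu : 0 < u) (x : H) :
    ⟪(T*T*Rs T (lam*u)) x, x⟫ ≤
      (1/(1+u)^2) * ⟪T x, x⟫ + (u/(lam*(1+u)^2)) * ⟪(T*T) x, x⟫ := by
  have hid := key_identity hT hlam hu
  have hA : IsSelfAdjoint (T - lam•(1:H →L[ℝ] H)) :=
    hT.isSelfAdjoint.sub (by rw [IsSelfAdjoint, star_smul, star_one, star_trivial])
  set A := T - lam•(1:H →L[ℝ] H) with hAdef
  have hpos : 0 ≤ ⟪(A * ((T * Rs T (lam*u)) * A)) x, x⟫ := by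
    rw [ContinuousLinearMap.mul_apply]
    calc (0:ℝ) ≤ ⟪(T * Rs T (lam*u)) (A x), A x⟫ :=
          inner_T_mul_Rs_nonneg hT (mul_pos hlam hu) (A x)
      _ = ⟪((T * Rs T (lam*u)) * A) x, A x⟫ := by simp [ContinuousLinearMap.mul_apply]
      _ = ⟪ContinuousLinearMap.adjoint A (((T * Rs T (lam*u)) * A) x), x⟫ := by
          rw [ContinuousLinearMap.adjoint_inner_left]
      _ = ⟪A (((T * Rs T (lam*u)) * A) x), x⟫ := by rw [hA.adjoint_eq]
  have hval := congrArg (fun (S : H →L[ℝ] H) => ⟪S x, x⟫) hid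
  simp only [sub_apply, add_apply, smul_apply, inner_sub_left, inner_add_left,
    real_inner_smul_left] at hval
  have hc : 0 ≤ u/(lam*(1+u)^2) := by positivity
  nlinarith [hpos]

lemma continuousOn_Rs (hT : T.IsPositive) :
    ContinuousOn (fun s : ℝ => Rs T s) (Ioi 0) := by
  intro s hs
  apply ContinuousAt.continuousWithinAt
  have h1 : ContinuousAt (fun s : ℝ => T + s • (1 : H →L[ℝ] H)) s := by fun_prop
  have hu := isUnit_shift hT (mem_Ioi.mp hs)
  have h2 : ContinuousAt (Ring.inverse : (H →L[ℝ] H) → (H →L[ℝ] H))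
      (T + s • (1 : H →L[ℝ] H)) := by
    have := NormedRing.inverse_continuousAt hu.unit
    rwa [hu.unit_spec] at this
  exact ContinuousAt.comp (g := Ring.inverse)
    (f := fun s : ℝ => T + s • (1 : H →L[ℝ] H)) h2 h1

lemma integrable_aux (hT : T.IsPositive) {α : ℝ} (hα : 0 < α) (hα1 : α < 1) (S : H →L[ℝ] H) :
    IntegrableOn (fun s : ℝ => s ^ (α-1) • (S * (T * Rs T s))) (Ioi 0) volume := by
  have hmeas : AEStronglyMeasurable (fun s : ℝ => s ^ (α-1) • (S * (T * Rs T s)))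
      (volume.restrict (Ioi (0:ℝ))) := by
    apply ContinuousOn.aestronglyMeasurable _ measurableSet_Ioi
    apply ContinuousOn.fun_smul
    · exact ContinuousOn.rpow_const continuousOn_id (fun s hs => Or.inl (ne_of_gt hs))
    · exact continuousOn_const.mul (continuousOn_const.mul (continuousOn_Rs hT))
  have key : Ioi (0:ℝ) = Ioc 0 1 ∪ Ioi 1 := (Ioc_union_Ioi_eq_Ioi zero_le_one).symm
  rw [key]
  apply IntegrableOn.union
  · have hsub : IntegrableOn (fun s : ℝ => (‖S‖*2) * s^(α-1)) (Ioc (0:ℝ) 1) volume := by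
      apply Integrable.const_mul
      exact (intervalIntegrable_iff_integrableOn_Ioc_of_le zero_le_one).mp
        (intervalIntegral.intervalIntegrable_rpow' (by linarith))
    apply Integrable.mono' hsub
      (hmeas.mono_measure (Measure.restrict_mono Ioc_subset_Ioi_self le_rfl))
    filter_upwards [ae_restrict_mem measurableSet_Ioc] with s hs
    have hs0 : (0:ℝ) < s := hs.1
    rw [norm_smul (s ^ (α-1)) (S * (T * Rs T s)), Real.norm_eq_abs,
      abs_of_pos (Real.rpow_pos_of_pos hs0 _), mul_comm]
    apply mul_le_mul_of_nonneg_right _ (Real.rpow_pos_of_pos hs0 _).le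
    calc ‖S * (T * Rs T s)‖ ≤ ‖S‖ * ‖T * Rs T s‖ := norm_mul_le _ _
      _ ≤ ‖S‖ * 2 := by have := norm_T_mul_Rs_le_two hT hs0; gcongr
  · have hsub : IntegrableOn (fun s : ℝ => (‖S‖*‖T‖) * s^(α-2)) (Ioi (1:ℝ)) volume :=
      (integrableOn_Ioi_rpow_of_lt (by linarith) zero_lt_one).const_mul _
    apply Integrable.mono' hsub
      (hmeas.mono_measure (Measure.restrict_mono (Ioi_subset_Ioi zero_le_one) le_rfl))
    filter_upwards [ae_restrict_mem measurableSet_Ioi] with s hs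
    have hs0 : (0:ℝ) < s := lt_trans zero_lt_one hs
    rw [norm_smul (s ^ (α-1)) (S * (T * Rs T s)), Real.norm_eq_abs,
      abs_of_pos (Real.rpow_pos_of_pos hs0 _)]
    have h1 : ‖S * (T * Rs T s)‖ ≤ (‖S‖*‖T‖) * s⁻¹ := by
      calc ‖S * (T * Rs T s)‖ ≤ ‖S‖ * ‖T * Rs T s‖ := norm_mul_le _ _
        _ ≤ ‖S‖ * (‖T‖ * ‖Rs T s‖) := by have := norm_mul_le T (Rs T s); gcongr
        _ ≤ ‖S‖ * (‖T‖ * s⁻¹) := by have := norm_Rs_le hT hs0; gcongr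
        _ = (‖S‖*‖T‖) * s⁻¹ := by ring
    calc s ^ (α-1) * ‖S * (T * Rs T s)‖ ≤ s ^ (α-1) * ((‖S‖*‖T‖) * s⁻¹) := by
          gcongr
      _ = (‖S‖*‖T‖) * (s ^ (α-1) * s⁻¹) := by ring
      _ = (‖S‖*‖T‖) * s^(α-2) := by
          rw [← Real.rpow_neg_one s, ← Real.rpow_add hs0, show α - 1 + -1 = α - 2 by ring]

lemma integrableOn_rpow_div_one_add_pow {p : ℝ} {n : ℕ} (hp : -1 < p) (hpn : p - n < -1) :
    IntegrableOn (fun u : ℝ => u ^ p / (1+u)^n) (Ioi (0:ℝ)) volume := by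
  have hmeas : AEStronglyMeasurable (fun u : ℝ => u ^ p / (1+u)^n)
      (volume.restrict (Ioi (0:ℝ))) := by
    apply ContinuousOn.aestronglyMeasurable _ measurableSet_Ioi
    apply ContinuousOn.div
    · exact ContinuousOn.rpow_const continuousOn_id (fun s hs => Or.inl (ne_of_gt hs))
    · fun_prop
    · intro u hu
      have : (0:ℝ) < 1 + u := by have := mem_Ioi.mp hu; linarith
      positivity
  have key : Ioi (0:ℝ) = Ioc 0 1 ∪ Ioi 1 := (Ioc_union_Ioi_eq_Ioi zero_le_one).symm
  rw [key]
  apply MeasureTheory.IntegrableOn.union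
  · have hsub : IntegrableOn (fun u : ℝ => u ^ p) (Ioc (0:ℝ) 1) volume :=
      (intervalIntegrable_iff_integrableOn_Ioc_of_le zero_le_one).mp
        (intervalIntegral.intervalIntegrable_rpow' hp)
    apply Integrable.mono' hsub
      (hmeas.mono_measure (Measure.restrict_mono Ioc_subset_Ioi_self le_rfl))
    filter_upwards [ae_restrict_mem measurableSet_Ioc] with u hu
    have hu0 : (0:ℝ) < u := hu.1
    have h1 : (1:ℝ) ≤ (1+u)^n := one_le_pow₀ (by linarith)
    have hup : (0:ℝ) < u ^ p := Real.rpow_pos_of_pos hu0 _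
    rw [Real.norm_eq_abs, abs_of_pos (by positivity)]
    calc u ^ p / (1+u)^n ≤ u ^ p / 1 := by gcongr
      _ = u ^ p := div_one _
  · have hsub : IntegrableOn (fun u : ℝ => u ^ (p - n)) (Ioi (1:ℝ)) volume :=
      integrableOn_Ioi_rpow_of_lt hpn zero_lt_one
    apply Integrable.mono' hsub
      (hmeas.mono_measure (Measure.restrict_mono (Ioi_subset_Ioi zero_le_one) le_rfl))
    filter_upwards [ae_restrict_mem measurableSet_Ioi] with u hu
    have hu0 : (0:ℝ) < u := lt_trans zero_lt_one hu
    have h2 : u^(n:ℝ) ≤ (1+u)^n := by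
      rw [Real.rpow_natCast]
      exact pow_le_pow_left₀ hu0.le (by linarith) n
    have hpow : (0:ℝ) < u ^ (n:ℝ) := Real.rpow_pos_of_pos hu0 _
    rw [Real.norm_eq_abs, abs_of_pos]
    · calc u ^ p / (1+u)^n ≤ u ^ p / u^(n:ℝ) := by gcongr
        _ = u ^ (p - n) := (Real.rpow_sub hu0 _ _).symm
    · have : (0:ℝ) < (1+u)^n := lt_of_lt_of_le hpow h2
      positivity

variable {α : ℝ}

/-- The image fact. -/
lemma image_Ioo_div : (fun x : ℝ => x / (1-x)) '' Ioo 0 1 = Ioi (0:ℝ) := by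
  ext y
  constructor
  · rintro ⟨x, ⟨hx0, hx1⟩, rfl⟩
    exact mem_Ioi.mpr (div_pos hx0 (by linarith))
  · intro hy
    have hy0 : 0 < y := mem_Ioi.mp hy
    refine ⟨y / (1+y), ⟨div_pos hy0 (by linarith), ?_⟩, ?_⟩
    · rw [div_lt_one (by linarith)]; linarith
    · field_simp; ring

lemma aux_J_eq_Ioo (hα : 0 < α) (hα1 : α < 1) :
    ∫ u in Ioi (0:ℝ), u ^ (α-1) / (1+u)^1
      = ∫ x in Ioo (0:ℝ) 1, x ^ (α-1) * (1-x) ^ (-α) := by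
  rw [← image_Ioo_div]
  rw [MeasureTheory.integral_image_eq_integral_abs_deriv_smul measurableSet_Ioo
    (f' := fun x => (1-x)⁻¹^2) ?hderiv ?hinj]
  · apply MeasureTheory.setIntegral_congr_fun measurableSet_Ioo
    intro x hx
    obtain ⟨hx0, hx1⟩ := hx
    have h1x : (0:ℝ) < 1 - x := by linarith
    have hxx : 0 < x / (1-x) := div_pos hx0 h1x
    have e1 : (1 + x / (1-x)) = (1-x)⁻¹ := by field_simp; ring
    have e2 : (x / (1-x)) ^ (α-1) = x ^ (α-1) * ((1-x) ^ (α-1))⁻¹ := by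
      rw [Real.div_rpow hx0.le h1x.le, div_eq_mul_inv]
    have e3 : ((1-x) ^ (α-1) : ℝ) = (1-x) ^ α * (1-x)⁻¹ := by
      rw [show α - 1 = α + (-1) by ring, Real.rpow_add h1x, Real.rpow_neg_one]
    have e4 : ((1-x) ^ (-α) : ℝ) = ((1-x) ^ α)⁻¹ := Real.rpow_neg h1x.le α
    have hpa : (0:ℝ) < (1-x) ^ α := Real.rpow_pos_of_pos h1x α
    simp only [smul_eq_mul, abs_of_pos (by positivity : (0:ℝ) < (1-x)⁻¹^2)]
    rw [e1, e2, e3, e4]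
    rw [pow_one]
    field_simp
  case hderiv =>
    intro x hx
    obtain ⟨hx0, hx1⟩ := hx
    have h1x : (1:ℝ) - x ≠ 0 := by
      have : (0:ℝ) < 1 - x := by linarith
      exact this.ne'
    apply HasDerivAt.hasDerivWithinAt
    have := (hasDerivAt_id x).div ((hasDerivAt_id x).const_sub 1) h1x
    refine this.congr_deriv ?_
    simp only [id]
    field_simp
    ring
  case hinj =>
    intro a ha b hb hab
    have h1a : (0:ℝ) < 1 - a := by linarith [ha.2]
    have h1b : (0:ℝ) < 1 - b := by linarith [hb.2]
    field_simp at hab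
    nlinarith [hab]

lemma aux_Ioo_eq_beta (hα : 0 < α) (hα1 : α < 1) :
    ∫ x in Ioo (0:ℝ) 1, x ^ (α-1) * (1-x) ^ (-α)
      = Real.Gamma α * Real.Gamma (1-α) := by
  have h1 : (0:ℝ) < 1 - α := by linarith
  have hbeta := Complex.Gamma_mul_Gamma_eq_betaIntegral
    (s := (α:ℂ)) (t := ((1-α : ℝ) : ℂ)) (by simpa using hα) (by simpa using h1)
  have hsum : (α:ℂ) + ((1-α:ℝ):ℂ) = 1 := by push_cast; ring
  rw [hsum, Complex.Gamma_one, one_mul] at hbeta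
  have hbi : Complex.betaIntegral (α:ℂ) ((1-α : ℝ):ℂ)
      = ((∫ x in (0:ℝ)..1, x ^ (α-1) * (1-x) ^ (-α) : ℝ) : ℂ) := by
    rw [Complex.betaIntegral]
    rw [← intervalIntegral.integral_ofReal]
    apply intervalIntegral.integral_congr
    intro x hx
    rw [uIcc_of_le zero_le_one] at hx
    obtain ⟨hx0, hx1⟩ := hx
    push_cast
    rw [show (α:ℂ) - 1 = ((α - 1 : ℝ) : ℂ) by push_cast; ring,
      show (1:ℂ) - (α:ℂ) - 1 = ((-α : ℝ) : ℂ) by push_cast; ring,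
      show (1:ℂ) - (x:ℂ) = (((1 - x : ℝ)) : ℂ) by push_cast; ring,
      ← Complex.ofReal_cpow hx0, ← Complex.ofReal_cpow (by linarith : (0:ℝ) ≤ 1 - x)]
  rw [hbi, Complex.Gamma_ofReal, Complex.Gamma_ofReal, ← Complex.ofReal_mul] at hbeta
  have := Complex.ofReal_injective hbeta
  rw [this, intervalIntegral.integral_of_le zero_le_one,
    MeasureTheory.integral_Ioc_eq_integral_Ioo]

lemma J_val (hα : 0 < α) (hα1 : α < 1) :
    ∫ u in Ioi (0:ℝ), u ^ (α-1) / (1+u)^1 = π / Real.sin (π * α) := by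
  rw [aux_J_eq_Ioo hα hα1, aux_Ioo_eq_beta hα hα1, Real.Gamma_mul_Gamma_one_sub]

lemma integrable_g3 (hα : 0 < α) (hα1 : α < 1) :
    IntegrableOn (fun u : ℝ => u ^ (α-1) / (1+u)^1) (Ioi (0:ℝ)) volume :=
  integrableOn_rpow_div_one_add_pow (by linarith) (by push_cast; linarith)

lemma integrable_g2 (hα : 0 < α) (hα1 : α < 1) :
    IntegrableOn (fun u : ℝ => u ^ α / (1+u)^2) (Ioi (0:ℝ)) volume :=
  integrableOn_rpow_div_one_add_pow (by linarith) (by push_cast; linarith)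

lemma integrable_g1 (hα : 0 < α) (hα1 : α < 1) :
    IntegrableOn (fun u : ℝ => u ^ (α-1) / (1+u)^2) (Ioi (0:ℝ)) volume :=
  integrableOn_rpow_div_one_add_pow (by linarith) (by push_cast; linarith)

lemma I2_val (hα : 0 < α) (hα1 : α < 1) :
    ∫ u in Ioi (0:ℝ), u ^ α / (1+u)^2
      = α * ∫ u in Ioi (0:ℝ), u ^ (α-1) / (1+u)^1 := by
  -- integration by parts : F u = -(u^α/(1+u)), F' = g2 - α g3
  set F : ℝ → ℝ := fun u => -(u ^ α / (1+u)) with hF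
  have hderiv : ∀ u ∈ Ioi (0:ℝ), HasDerivAt F
      (u ^ α / (1+u)^2 - α * (u ^ (α-1) / (1+u)^1)) u := by
    intro u hu
    have hu0 : (0:ℝ) < u := mem_Ioi.mp hu
    have h1u : (0:ℝ) < 1 + u := by linarith
    have hd1 : HasDerivAt (fun u : ℝ => u ^ α) (α * u ^ (α-1)) u :=
      Real.hasDerivAt_rpow_const (Or.inl hu0.ne')
    have hd2 : HasDerivAt (fun u : ℝ => 1 + u) 1 u := by
      simpa using (hasDerivAt_id u).const_add 1
    have := (hd1.div hd2 h1u.ne').neg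
    refine this.congr_deriv ?_
    have hua : u ^ α = u ^ (α-1) * u := by
      rw [← Real.rpow_add_one hu0.ne' (α-1)]; norm_num
    rw [pow_one]
    field_simp
    rw [hua]
    ring
  have hcont : ContinuousWithinAt F (Ici (0:ℝ)) 0 := by
    apply ContinuousWithinAt.mono _ (subset_univ _)
    have h1 : ContinuousAt (fun u : ℝ => u ^ α) 0 :=
      Real.continuousAt_rpow_const 0 α (Or.inr hα.le)
    have : ContinuousAt F 0 := by
      apply ContinuousAt.neg
      exact h1.div (by fun_prop) (by norm_num)
    exact this.continuousWithinAt
  have htop : Tendsto F atTop (𝓝 0) := by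
    rw [show (0:ℝ) = -0 by norm_num]
    apply Tendsto.neg
    apply squeeze_zero_norm' (a := fun u : ℝ => u ^ (α-1))
    · filter_upwards [eventually_gt_atTop (0:ℝ)] with u hu
      have h1u : (0:ℝ) < 1 + u := by linarith
      rw [Real.norm_eq_abs, abs_of_pos (by positivity)]
      calc u ^ α / (1+u) ≤ u ^ α / u := by gcongr; linarith
        _ = u ^ (α-1) := by rw [← Real.rpow_sub_one hu.ne']
    · have := tendsto_rpow_neg_atTop (y := 1-α) (by linarith)
      simpa [show -(1-α) = α-1 by ring] using this
  have hint : IntegrableOn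
      (fun u : ℝ => u ^ α / (1+u)^2 - α * (u ^ (α-1) / (1+u)^1)) (Ioi (0:ℝ)) volume :=
    (integrable_g2 hα hα1).sub ((integrable_g3 hα hα1).const_mul α)
  have hIBP := MeasureTheory.integral_Ioi_of_hasDerivAt_of_tendsto hcont hderiv hint htop
  have hF0 : F 0 = 0 := by
    simp [hF, Real.zero_rpow hα.ne']
  rw [hF0, sub_zero] at hIBP
  have hsplit := MeasureTheory.integral_sub (integrable_g2 hα hα1)
    ((integrable_g3 hα hα1).const_mul α)
  rw [hsplit, MeasureTheory.integral_const_mul] at hIBP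
  linarith [hIBP]

lemma I1_val (hα : 0 < α) (hα1 : α < 1) :
    ∫ u in Ioi (0:ℝ), u ^ (α-1) / (1+u)^2
      = (1-α) * ∫ u in Ioi (0:ℝ), u ^ (α-1) / (1+u)^1 := by
  have hpt : ∀ u ∈ Ioi (0:ℝ), u ^ (α-1) / (1+u)^2
      = u ^ (α-1) / (1+u)^1 - u ^ α / (1+u)^2 := by
    intro u hu
    have hu0 : (0:ℝ) < u := mem_Ioi.mp hu
    have h1u : (0:ℝ) < 1 + u := by linarith
    have hua : u ^ α = u ^ (α-1) * u := by
      rw [← Real.rpow_add_one hu0.ne' (α-1)]; norm_num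
    rw [pow_one, hua]
    field_simp
    ring
  rw [MeasureTheory.setIntegral_congr_fun measurableSet_Ioi hpt,
    MeasureTheory.integral_sub (integrable_g3 hα hα1) (integrable_g2 hα hα1),
    I2_val hα hα1]
  ring

lemma fracPow_rep (hT : T.IsPositive) (hα : 0 < α) (hα1 : α < 1) :
    T * fracPow T α
      = (Real.sin (α*Real.pi)/Real.pi) •
          ∫ s in Ioi (0:ℝ), s^(α-1) • (T * (T * Rs T s)) := by
  have hfi : IntegrableOn (fun s : ℝ => s^(α-1) • (T * Rs T s)) (Ioi 0) volume :=
    (integrable_aux hT hα hα1 1).congr_fun (fun s _ => by simp only [one_mul]) measurableSet_Ioi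
  rw [fracPow, mul_smul_comm]
  congr 1
  have h := ContinuousLinearMap.integral_comp_comm
    (ContinuousLinearMap.mul ℝ (H →L[ℝ] H) T) hfi
  show T * (∫ s in Ioi (0:ℝ), s^(α-1) • (T * Rs T s))
      = ∫ s in Ioi (0:ℝ), s^(α-1) • (T * (T * Rs T s))
  rw [show T * (∫ s in Ioi (0:ℝ), s^(α-1) • (T * Rs T s))
      = ContinuousLinearMap.mul ℝ (H →L[ℝ] H) T
          (∫ s in Ioi (0:ℝ), s^(α-1) • (T * Rs T s)) from rfl, ← h]
  apply setIntegral_congr_fun measurableSet_Ioi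
  intro s _
  simp only [_root_.map_smul, ContinuousLinearMap.mul_apply', mul_smul_comm]

lemma isSelfAdjoint_TfracPow (hT : T.IsPositive) (hα : 0 < α) (hα1 : α < 1) :
    IsSelfAdjoint (T * fracPow T α) := by
  rw [fracPow_rep hT hα hα1, IsSelfAdjoint, star_smul, star_trivial]
  congr 1
  have h := (starL' ℝ (A := H →L[ℝ] H)).integral_comp_comm
    (fun s : ℝ => s^(α-1) • (T * (T * Rs T s))) (μ := volume.restrict (Ioi 0))
  rw [show (star (∫ s in Ioi (0:ℝ), s^(α-1) • (T * (T * Rs T s))) : H →L[ℝ] H)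
      = starL' ℝ (∫ s in Ioi (0:ℝ), s^(α-1) • (T * (T * Rs T s))) from rfl, ← h]
  apply setIntegral_congr_fun measurableSet_Ioi
  intro s hs
  have hs0 : (0:ℝ) < s := mem_Ioi.mp hs
  have hcomm := Rs_comm hT hs0
  show star (s^(α-1) • (T * (T * Rs T s))) = _
  rw [star_smul, star_trivial]
  congr 1
  calc star (T*(T*Rs T s)) = star (T * Rs T s) * star T := star_mul _ _
    _ = (star (Rs T s) * star T) * star T := by rw [star_mul]
    _ = (Rs T s * T) * T := by
        rw [(isSelfAdjoint_Rs hT hs0).star_eq, hT.isSelfAdjoint.star_eq]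
    _ = T*(T*Rs T s) := by rw [← hcomm, mul_assoc, ← hcomm]

lemma form_main (hT : T.IsPositive) (hα : 0 < α) (hα1 : α < 1) (hlam : 0 < lam) (x : H) :
    lam ^ (1-α) * ⟪(T * fracPow T α) x, x⟫ ≤
      (1-α)*lam*⟪T x, x⟫ + α*⟪(T*T) x, x⟫ := by
  set a := ⟪T x, x⟫ with ha_def
  set b := ⟪(T*T) x, x⟫ with hb_def
  have hsin : 0 < Real.sin (α * Real.pi) :=
    Real.sin_pos_of_pos_of_lt_pi (by positivity) (by nlinarith [Real.pi_pos])
  set c := Real.sin (α*Real.pi)/Real.pi with hc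
  have hcpos : 0 < c := div_pos hsin Real.pi_pos
  have hgi : IntegrableOn (fun s : ℝ => s^(α-1) • (T * (T * Rs T s))) (Ioi 0) volume :=
    integrable_aux hT hα hα1 T
  set G : ℝ → ℝ := fun s => ⟪x, (s^(α-1) • (T * (T * Rs T s))) x⟫ with hG
  -- step 1 : the value
  have hval : ⟪(T * fracPow T α) x, x⟫ = c * ∫ s in Ioi (0:ℝ), G s := by
    rw [fracPow_rep hT hα hα1, ← hc, smul_apply, real_inner_smul_left]
    congr 1
    rw [real_inner_comm, ContinuousLinearMap.integral_apply hgi x]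
    exact (ContinuousLinearMap.integral_comp_comm (innerSL ℝ x)
      (hgi.apply_continuousLinearMap x)).symm
  -- step 2 : integrability of G and the substituted integrand
  have hGint : IntegrableOn G (Ioi 0) volume := by
    exact (hgi.apply_continuousLinearMap x).const_inner (𝕜 := ℝ) x
  have hGlam_int : IntegrableOn (fun u : ℝ => G (lam*u)) (Ioi 0) volume := by
    rw [integrableOn_Ioi_comp_mul_left_iff G 0 hlam, mul_zero]
    exact hGint
  -- step 3 : substitution
  have hsub : ∫ s in Ioi (0:ℝ), G s = lam * ∫ u in Ioi (0:ℝ), G (lam*u) := by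
    have h := integral_comp_mul_left_Ioi G 0 hlam
    rw [mul_zero] at h
    rw [h, smul_eq_mul, ← mul_assoc, mul_inv_cancel₀ hlam.ne', one_mul]
  -- step 4 : pointwise bound
  set RHS : ℝ → ℝ := fun u =>
    lam^(α-1) * (a * (u^(α-1)/(1+u)^2) + (b/lam) * (u^α/(1+u)^2)) with hRHS
  have hRHS_int : IntegrableOn RHS (Ioi 0) volume :=
    ((((integrable_g1 hα hα1).const_mul a).add
      ((integrable_g2 hα hα1).const_mul (b/lam))).const_mul (lam^(α-1)))
  have hpt : ∀ u ∈ Ioi (0:ℝ), G (lam*u) ≤ RHS u := by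
    intro u hu
    have hu0 : (0:ℝ) < u := mem_Ioi.mp hu
    have h1u : (0:ℝ) < 1+u := by linarith
    have hq := key_pointwise hT hlam hu0 x
    have hGe : G (lam*u) = (lam*u)^(α-1) * ⟪(T*T*Rs T (lam*u)) x, x⟫ := by
      rw [hG]
      simp only [smul_apply, inner_smul_right]
      rw [real_inner_comm, mul_assoc]
    rw [hGe, hRHS, Real.mul_rpow hlam.le hu0.le]
    have hua : u ^ α = u ^ (α-1) * u := by
      rw [← Real.rpow_add_one hu0.ne' (α-1)]; norm_num
    have hup : (0:ℝ) ≤ u ^ (α-1) := (Real.rpow_pos_of_pos hu0 _).le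
    have hlp : (0:ℝ) ≤ lam ^ (α-1) := (Real.rpow_pos_of_pos hlam _).le
    rw [mul_assoc]
    apply mul_le_mul_of_nonneg_left _ hlp
    calc u^(α-1) * ⟪(T*T*Rs T (lam*u)) x, x⟫
        ≤ u^(α-1) * ((1/(1+u)^2) * a + (u/(lam*(1+u)^2)) * b) := by
          apply mul_le_mul_of_nonneg_left hq hup
      _ = a * (u^(α-1)/(1+u)^2) + (b/lam) * (u^α/(1+u)^2) := by
          rw [hua]; field_simp
  have hmono := setIntegral_mono_on hGlam_int hRHS_int measurableSet_Ioi hpt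
  -- step 5 : compute ∫ RHS
  have hI : ∫ u in Ioi (0:ℝ), RHS u
      = lam^(α-1) * (a * ((1-α) * (Real.pi / Real.sin (Real.pi * α)))
        + (b/lam) * (α * (Real.pi / Real.sin (Real.pi * α)))) := by
    rw [hRHS, MeasureTheory.integral_const_mul]
    congr 1
    rw [MeasureTheory.integral_add ((integrable_g1 hα hα1).const_mul a)
      ((integrable_g2 hα hα1).const_mul (b/lam)),
      MeasureTheory.integral_const_mul, MeasureTheory.integral_const_mul,
      I1_val hα hα1, I2_val hα hα1, J_val hα hα1]
  -- step 6 : conclude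
  have hp : (0:ℝ) < lam ^ (1-α) := Real.rpow_pos_of_pos hlam _
  have hpq : lam ^ (α-1) = (lam ^ (1-α))⁻¹ := by
    rw [show α - 1 = -(1-α) by ring, Real.rpow_neg hlam.le]
  have hs2 : Real.sin (Real.pi * α) = Real.sin (α * Real.pi) := by rw [mul_comm]
  calc lam ^ (1-α) * ⟪(T * fracPow T α) x, x⟫
      = lam ^ (1-α) * (c * (lam * ∫ u in Ioi (0:ℝ), G (lam*u))) := by
        rw [hval, hsub]
    _ ≤ lam ^ (1-α) * (c * (lam * ∫ u in Ioi (0:ℝ), RHS u)) := by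
        apply mul_le_mul_of_nonneg_left _ hp.le
        apply mul_le_mul_of_nonneg_left _ hcpos.le
        exact mul_le_mul_of_nonneg_left hmono hlam.le
    _ = (1-α)*lam*a + α*b := by
        rw [hI, hpq, hc, hs2]
        field_simp


end OpYoungAux

open OpYoungAux

/-- Operator Young inequality (key step of Lemma A.2.6, case `r ∈ [1/2,1]`):
`λ^{2-2r} T^{2r} ≤ (2-2r) λ T + (2r-1) T²` in the Loewner order. -/
theorem operator_young_inequality
    {H : Type*} [NormedAddCommGroup H] [InnerProductSpace ℝ H] [CompleteSpace H]
    [TopologicalSpace.SeparableSpace H]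
    (T : H →L[ℝ] H) (hT : T.IsPositive)
    (lam r : ℝ) (hlam : 0 < lam) (hr : r ∈ Set.Icc (1/2 : ℝ) 1) :
    ((((2 - 2*r) * lam) • T + (2*r - 1) • (T * T)) -
        lam ^ (2 - 2*r) • opRpow T (2*r)).IsPositive := by
  obtain ⟨hr1, hr2⟩ := hr
  rcases eq_or_lt_of_le hr2 with h1 | h1
  · -- r = 1
    subst h1
    have h2 : opRpow T (2*1) = T * T := by
      rw [opRpow, if_pos (by norm_num : (0:ℝ) ≤ 2*1), nnPow]
      norm_num [pow_two]
    rw [h2]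
    have h3 : ((((2 - 2*1) * lam) • T + ((2*1 - 1 : ℝ)) • (T * T)) -
        lam ^ (2 - 2*(1:ℝ)) • (T * T)) = 0 := by
      norm_num [Real.rpow_zero]
    rw [h3]
    exact ContinuousLinearMap.isPositive_zero
  rcases eq_or_lt_of_le hr1 with h0 | h0
  · -- r = 1/2
    have h0' : r = 1/2 := h0.symm
    subst h0'
    have h2 : opRpow T (2*(1/2 : ℝ)) = T := by
      rw [opRpow, if_pos (by norm_num : (0:ℝ) ≤ 2*(1/2)), nnPow]
      norm_num
    rw [h2]
    have h3 : ((((2 - 2*(1/2 : ℝ)) * lam) • T + ((2*(1/2 : ℝ) - 1)) • (T * T)) -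
        lam ^ (2 - 2*(1/2 : ℝ)) • T) = 0 := by
      norm_num [Real.rpow_one]
    rw [h3]
    exact ContinuousLinearMap.isPositive_zero
  · -- interior case
    set α : ℝ := 2*r - 1 with hα_def
    have hα : 0 < α := by simp only [hα_def]; linarith
    have hα1 : α < 1 := by simp only [hα_def]; linarith
    have hfloor : ⌊2*r⌋₊ = 1 := by
      rw [Nat.floor_eq_iff (by linarith)]
      push_cast
      constructor <;> linarith
    have h2 : opRpow T (2*r) = T * fracPow T α := by
      rw [opRpow, if_pos (by linarith : (0:ℝ) ≤ 2*r), nnPow, hfloor]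
      rw [if_neg (by push_cast; simp only [← hα_def]; exact hα.ne')]
      push_cast
      rw [pow_one, show (2*r - 1 : ℝ) = α from rfl]
    rw [h2]
    have hsmul : ∀ (c : ℝ) (A : H →L[ℝ] H), IsSelfAdjoint A → IsSelfAdjoint (c • A) := by
      intro c A hA
      rw [IsSelfAdjoint, star_smul, star_trivial, hA.star_eq]
    constructor
    · -- self-adjointness
      rw [← ContinuousLinearMap.isSelfAdjoint_iff_isSymmetric]
      apply IsSelfAdjoint.sub
      · apply IsSelfAdjoint.add
        · exact hsmul _ _ hT.isSelfAdjoint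
        · apply hsmul
          rw [IsSelfAdjoint, star_mul, hT.isSelfAdjoint.star_eq]
      · exact hsmul _ _ (isSelfAdjoint_TfracPow hT hα hα1)
    · intro x
      have key := form_main hT hα hα1 hlam x
      simp only [reApplyInnerSelf_apply, RCLike.re_to_real]
      simp only [sub_apply, add_apply, smul_apply, inner_sub_left, inner_add_left,
        real_inner_smul_left]
      have e1 : 2 - 2*r = 1 - α := by rw [hα_def]; ring
      rw [e1]
      linarith [key]
end
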